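/- arXiv:2202.09340 — 6 statements merged into one kernel-verified Lean document; each statement's English description precedes it below -/
import Mathlib

section
/- Let f : ℝ^d → ℝ be a bounded measurable function, σ > 0, and u(x) = E_{δ∼N(0,σ²I)}[f(x+δ)]. Then u is differentiable at every x ∈ ℝ^d and its gradient satisfies Stein's identity: ∇u(x) = E_{δ∼N(0,σ²I)}[(δ/σ²) · f(x+δ)]. -/
open MeasureTheory Real

set_option maxHeartbeats 1000000
set_option synthInstance.maxHeartbeats 400000

/-- The Gaussian probability measure `N(0, σ²I)` on `ℝ^d`, defined via its density
with respect to the Lebesgue measure. -/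
noncomputable def gaussianMeasure (d : ℕ) (σ : ℝ) :
    Measure (EuclideanSpace ℝ (Fin d)) :=
  volume.withDensity fun δ =>
    ENNReal.ofReal ((2 * π * σ ^ 2) ^ (-(d : ℝ) / 2) * Real.exp (-‖δ‖ ^ 2 / (2 * σ ^ 2)))

/-! ### Auxiliary lemmas -/

lemma stein_aux_exp (s : ℝ) : s * rexp (-(s ^ 2 / 2)) ≤ 1 := by
  have h1 : s ≤ rexp (s ^ 2 / 2) := by
    have h := Real.add_one_le_exp (s ^ 2 / 2)
    nlinarith [sq_nonneg (s - 1)]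
  calc s * rexp (-(s ^ 2 / 2)) ≤ rexp (s ^ 2 / 2) * rexp (-(s ^ 2 / 2)) :=
        mul_le_mul_of_nonneg_right h1 (exp_nonneg _)
    _ = 1 := by rw [← Real.exp_add]; simp

lemma stein_aux_mul {b : ℝ} (hb : 0 < b) (t : ℝ) :
    t * rexp (-(b * t ^ 2)) ≤ (Real.sqrt b)⁻¹ * rexp (-(b / 2 * t ^ 2)) := by
  have hsb : 0 < Real.sqrt b := Real.sqrt_pos.mpr hb
  have key := stein_aux_exp (Real.sqrt b * t)
  have hsq : (Real.sqrt b * t) ^ 2 = b * t ^ 2 := by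
    rw [mul_pow, Real.sq_sqrt hb.le]
  rw [hsq] at key
  have hsplit : rexp (-(b * t ^ 2)) = rexp (-(b * t ^ 2 / 2)) * rexp (-(b / 2 * t ^ 2)) := by
    rw [← Real.exp_add]; ring_nf
  rw [hsplit]
  have h2 : t * (rexp (-(b * t ^ 2 / 2)) * rexp (-(b / 2 * t ^ 2)))
      = (Real.sqrt b)⁻¹ *
        ((Real.sqrt b * t * rexp (-(b * t ^ 2 / 2))) * rexp (-(b / 2 * t ^ 2))) := by
    field_simp
  rw [h2]
  have h3 : (Real.sqrt b * t * rexp (-(b * t ^ 2 / 2))) * rexp (-(b / 2 * t ^ 2))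
      ≤ 1 * rexp (-(b / 2 * t ^ 2)) := by
    apply mul_le_mul_of_nonneg_right _ (exp_nonneg _)
    convert key using 3
  calc (Real.sqrt b)⁻¹ * ((Real.sqrt b * t * rexp (-(b * t ^ 2 / 2))) * rexp (-(b / 2 * t ^ 2)))
      ≤ (Real.sqrt b)⁻¹ * (1 * rexp (-(b / 2 * t ^ 2))) :=
        mul_le_mul_of_nonneg_left h3 (by positivity)
    _ = (Real.sqrt b)⁻¹ * rexp (-(b / 2 * t ^ 2)) := by ring

lemma stein_integrable_gauss (d : ℕ) {b : ℝ} (hb : 0 < b) :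
    Integrable (fun v : EuclideanSpace ℝ (Fin d) => rexp (-(b * ‖v‖ ^ 2))) := by
  have h := (GaussianFourier.integrable_cexp_neg_mul_sq_norm_add
    (V := EuclideanSpace ℝ (Fin d)) (b := (b : ℂ)) (by simpa using hb) 0 0).norm
  refine h.congr (Filter.Eventually.of_forall fun v => ?_)
  simp only [Complex.norm_exp]
  norm_num
  left
  norm_cast

lemma stein_integrable_norm_gauss (d : ℕ) {b : ℝ} (hb : 0 < b) :
    Integrable (fun v : EuclideanSpace ℝ (Fin d) => ‖v‖ * rexp (-(b * ‖v‖ ^ 2))) := by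
  apply ((stein_integrable_gauss d (half_pos hb)).const_mul ((Real.sqrt b)⁻¹)).mono'
  · apply Continuous.aestronglyMeasurable
    exact continuous_norm.mul (Real.continuous_exp.comp (by continuity))
  · refine Filter.Eventually.of_forall fun v => ?_
    rw [Real.norm_eq_abs, abs_of_nonneg (by positivity)]
    exact stein_aux_mul hb ‖v‖

lemma stein_integral_gaussianMeasure {d : ℕ} {σ : ℝ} (hσ : 0 < σ) {G : Type*}
    [NormedAddCommGroup G] [NormedSpace ℝ G] (h : EuclideanSpace ℝ (Fin d) → G) :
    ∫ δ, h δ ∂(gaussianMeasure d σ) =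
      ∫ δ, ((2 * π * σ ^ 2) ^ (-(d : ℝ) / 2) * rexp (-‖δ‖ ^ 2 / (2 * σ ^ 2))) • h δ := by
  have hmeas : Measurable fun δ : EuclideanSpace ℝ (Fin d) =>
      Real.toNNReal ((2 * π * σ ^ 2) ^ (-(d : ℝ) / 2) * rexp (-‖δ‖ ^ 2 / (2 * σ ^ 2))) := by
    apply Measurable.real_toNNReal
    apply Continuous.measurable
    exact continuous_const.mul (Real.continuous_exp.comp (by continuity))
  rw [gaussianMeasure]
  simp only [ENNReal.ofReal]
  rw [integral_withDensity_eq_integral_smul hmeas h]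
  congr 1
  funext δ
  rw [NNReal.smul_def, Real.coe_toNNReal _ (by positivity)]

lemma stein_integral_gaussianMeasure' {d : ℕ} {σ : ℝ} (hσ : 0 < σ) {G : Type*}
    [NormedAddCommGroup G] [NormedSpace ℝ G] (h : EuclideanSpace ℝ (Fin d) → G) :
    ∫ δ, h δ ∂(gaussianMeasure d σ) =
      ∫ δ, ((2 * π * σ ^ 2) ^ (-(d : ℝ) / 2) *
        rexp (-((2 * σ ^ 2)⁻¹ * ‖δ‖ ^ 2))) • h δ := by
  rw [stein_integral_gaussianMeasure hσ h]
  congr 1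
  funext δ
  rw [show -‖δ‖ ^ 2 / (2 * σ ^ 2) = -((2 * σ ^ 2)⁻¹ * ‖δ‖ ^ 2) by
    field_simp]

lemma stein_deriv {d : ℕ} {σ : ℝ} (hσ : 0 < σ) (a : ℝ) (y x : EuclideanSpace ℝ (Fin d)) :
    HasFDerivAt (fun x : EuclideanSpace ℝ (Fin d) =>
        a * ((2 * π * σ ^ 2) ^ (-(d : ℝ) / 2) * rexp (-((2 * σ ^ 2)⁻¹ * ‖y - x‖ ^ 2))))
      ((a * ((2 * π * σ ^ 2) ^ (-(d : ℝ) / 2) * rexp (-((2 * σ ^ 2)⁻¹ * ‖y - x‖ ^ 2))) / σ ^ 2) •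
        innerSL ℝ (y - x)) x := by
  have hσ2 : σ ^ 2 ≠ 0 := by positivity
  have h1 : HasFDerivAt (fun x : EuclideanSpace ℝ (Fin d) => y - x)
      (-(ContinuousLinearMap.id ℝ (EuclideanSpace ℝ (Fin d)))) x := by
    exact (hasFDerivAt_id (𝕜 := ℝ) x).const_sub y
  have h2 : HasFDerivAt (fun z : EuclideanSpace ℝ (Fin d) => ‖z‖ ^ 2)
      (2 • innerSL ℝ (y - x)) (y - x) := (hasStrictFDerivAt_norm_sq _).hasFDerivAt
  have h3 := h2.comp x h1
  have h4 := h3.const_mul (-(2 * σ ^ 2)⁻¹)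
  simp only [neg_mul] at h4
  have h5 := h4.exp
  have h6 := (h5.const_mul ((2 * π * σ ^ 2) ^ (-(d : ℝ) / 2))).const_mul a
  refine h6.congr_fderiv ?_
  ext w
  simp only [ContinuousLinearMap.coe_smul', Pi.smul_apply, ContinuousLinearMap.coe_comp',
    Function.comp_apply, ContinuousLinearMap.neg_apply, ContinuousLinearMap.coe_id', id_eq,
    ContinuousLinearMap.smul_apply, innerSL_apply_apply, smul_eq_mul,
    two_smul, ContinuousLinearMap.add_apply, inner_neg_right]
  field_simp
  ring

lemma stein_core {d : ℕ} {σ : ℝ} (hσ : 0 < σ) {f : EuclideanSpace ℝ (Fin d) → ℝ}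
    (hf : Measurable f) {C : ℝ} (hbd : ∀ x, |f x| ≤ C) (x₀ : EuclideanSpace ℝ (Fin d)) :
    HasFDerivAt (fun x => ∫ y, f y *
        ((2 * π * σ ^ 2) ^ (-(d : ℝ) / 2) * rexp (-((2 * σ ^ 2)⁻¹ * ‖y - x‖ ^ 2))))
      (∫ y, (f y * ((2 * π * σ ^ 2) ^ (-(d : ℝ) / 2) *
          rexp (-((2 * σ ^ 2)⁻¹ * ‖y - x₀‖ ^ 2))) / σ ^ 2) • innerSL ℝ (y - x₀)) x₀ := by
  have hσ2 : (0 : ℝ) < σ ^ 2 := by positivity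
  have hb : (0 : ℝ) < (2 * σ ^ 2)⁻¹ := by positivity
  have hc : (0 : ℝ) < (2 * π * σ ^ 2) ^ (-(d : ℝ) / 2) := by positivity
  have hC0 : 0 ≤ C := (abs_nonneg _).trans (hbd 0)
  have hgcont : Continuous fun z : EuclideanSpace ℝ (Fin d) =>
      (2 * π * σ ^ 2) ^ (-(d : ℝ) / 2) * rexp (-((2 * σ ^ 2)⁻¹ * ‖z‖ ^ 2)) :=
    continuous_const.mul (Real.continuous_exp.comp
      (((continuous_const.mul (continuous_norm.pow 2))).neg))
  have hmeasx : ∀ x : EuclideanSpace ℝ (Fin d), AEStronglyMeasurable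
      (fun y => f y * ((2 * π * σ ^ 2) ^ (-(d : ℝ) / 2) *
        rexp (-((2 * σ ^ 2)⁻¹ * ‖y - x‖ ^ 2)))) volume := by
    intro x
    exact (hf.mul ((hgcont.comp (continuous_id.sub continuous_const)).measurable)
      ).aestronglyMeasurable
  -- translated Gaussian integrability
  have hgint : ∀ {b' : ℝ}, 0 < b' →
      Integrable (fun y : EuclideanSpace ℝ (Fin d) => rexp (-(b' * ‖y - x₀‖ ^ 2))) := by
    intro b' hb'
    exact (stein_integrable_gauss d hb').comp_sub_right x₀
  refine hasFDerivAt_integral_of_dominated_of_fderiv_le (𝕜 := ℝ)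
    (F' := fun x y => (f y * ((2 * π * σ ^ 2) ^ (-(d : ℝ) / 2) *
      rexp (-((2 * σ ^ 2)⁻¹ * ‖y - x‖ ^ 2))) / σ ^ 2) • innerSL ℝ (y - x))
    (bound := fun y => (C * (2 * π * σ ^ 2) ^ (-(d : ℝ) / 2) / σ ^ 2 *
      (Real.sqrt ((2 * σ ^ 2)⁻¹))⁻¹ * rexp ((2 * σ ^ 2)⁻¹ / 2)) *
      rexp (-((2 * σ ^ 2)⁻¹ / 4 * ‖y - x₀‖ ^ 2))) (Metric.ball_mem_nhds x₀ one_pos)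
    (Filter.Eventually.of_forall hmeasx) ?_ ?_ ?_ ?_ ?_
  · -- integrability at x₀
    refine Integrable.mono' (((hgint hb).const_mul
      (C * (2 * π * σ ^ 2) ^ (-(d : ℝ) / 2)))) (hmeasx x₀)
      (Filter.Eventually.of_forall fun y => ?_)
    rw [Real.norm_eq_abs, abs_mul, abs_mul, abs_of_nonneg hc.le, abs_of_nonneg (exp_nonneg _)]
    calc |f y| * ((2 * π * σ ^ 2) ^ (-(d : ℝ) / 2) * rexp (-((2 * σ ^ 2)⁻¹ * ‖y - x₀‖ ^ 2)))
        ≤ C * ((2 * π * σ ^ 2) ^ (-(d : ℝ) / 2) * rexp (-((2 * σ ^ 2)⁻¹ * ‖y - x₀‖ ^ 2))) :=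
          mul_le_mul_of_nonneg_right (hbd y) (by positivity)
      _ = C * (2 * π * σ ^ 2) ^ (-(d : ℝ) / 2) * rexp (-((2 * σ ^ 2)⁻¹ * ‖y - x₀‖ ^ 2)) := by
          ring
  · -- AEStronglyMeasurable of F' x₀
    apply AEStronglyMeasurable.fun_smul
    · exact ((hf.mul ((hgcont.comp (continuous_id.sub continuous_const)).measurable)).div_const
        _).aestronglyMeasurable
    · exact (Continuous.aestronglyMeasurable
        ((innerSL ℝ).continuous.comp (continuous_id.sub continuous_const)))
  · -- bound
    refine Filter.Eventually.of_forall fun y => fun x hx => ?_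
    have hxd : ‖x - x₀‖ < 1 := by
      rw [← dist_eq_norm]; exact Metric.mem_ball.mp hx
    beta_reduce
    have hns : (f y * ((2 * π * σ ^ 2) ^ (-(d : ℝ) / 2) *
          rexp (-((2 * σ ^ 2)⁻¹ * ‖y - x‖ ^ 2))) / σ ^ 2) • innerSL ℝ (y - x)
        = innerSL ℝ ((f y * ((2 * π * σ ^ 2) ^ (-(d : ℝ) / 2) *
          rexp (-((2 * σ ^ 2)⁻¹ * ‖y - x‖ ^ 2))) / σ ^ 2) • (y - x)) := by
      ext w
      simp [inner_smul_left]
    rw [hns, innerSL_apply_norm, norm_smul, Real.norm_eq_abs]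
    have hby : |f y * ((2 * π * σ ^ 2) ^ (-(d : ℝ) / 2) *
          rexp (-((2 * σ ^ 2)⁻¹ * ‖y - x‖ ^ 2))) / σ ^ 2| * ‖y - x‖
        = |f y| * (2 * π * σ ^ 2) ^ (-(d : ℝ) / 2) / σ ^ 2 *
          (‖y - x‖ * rexp (-((2 * σ ^ 2)⁻¹ * ‖y - x‖ ^ 2))) := by
      rw [abs_div, abs_mul, abs_mul, abs_of_nonneg hc.le, abs_of_nonneg (exp_nonneg _),
        abs_of_nonneg hσ2.le]
      ring
    rw [hby]
    have h2 := stein_aux_mul hb ‖y - x‖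
    have h3 : rexp (-((2 * σ ^ 2)⁻¹ / 2 * ‖y - x‖ ^ 2))
        ≤ rexp ((2 * σ ^ 2)⁻¹ / 2) * rexp (-((2 * σ ^ 2)⁻¹ / 4 * ‖y - x₀‖ ^ 2)) := by
      rw [← Real.exp_add]
      apply Real.exp_le_exp.mpr
      have htri : ‖y - x₀‖ ≤ ‖y - x‖ + ‖x - x₀‖ := by
        have h := norm_add_le (y - x) (x - x₀)
        rw [sub_add_sub_cancel] at h
        exact h
      have h4 : ‖y - x₀‖ ^ 2 ≤ 2 * ‖y - x‖ ^ 2 + 2 := by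
        nlinarith [sq_nonneg (‖y - x‖ - ‖x - x₀‖), norm_nonneg (y - x₀), norm_nonneg (y - x),
          norm_nonneg (x - x₀), mul_self_le_mul_self (norm_nonneg (y - x₀)) htri]
      nlinarith [mul_le_mul_of_nonneg_left h4 (le_of_lt hb)]
    calc |f y| * (2 * π * σ ^ 2) ^ (-(d : ℝ) / 2) / σ ^ 2 *
          (‖y - x‖ * rexp (-((2 * σ ^ 2)⁻¹ * ‖y - x‖ ^ 2)))
        ≤ C * (2 * π * σ ^ 2) ^ (-(d : ℝ) / 2) / σ ^ 2 *
          (‖y - x‖ * rexp (-((2 * σ ^ 2)⁻¹ * ‖y - x‖ ^ 2))) := by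
          gcongr
          exact hbd y
      _ ≤ C * (2 * π * σ ^ 2) ^ (-(d : ℝ) / 2) / σ ^ 2 *
          ((Real.sqrt ((2 * σ ^ 2)⁻¹))⁻¹ * rexp (-((2 * σ ^ 2)⁻¹ / 2 * ‖y - x‖ ^ 2))) :=
          mul_le_mul_of_nonneg_left h2 (by positivity)
      _ ≤ C * (2 * π * σ ^ 2) ^ (-(d : ℝ) / 2) / σ ^ 2 *
          ((Real.sqrt ((2 * σ ^ 2)⁻¹))⁻¹ *
            (rexp ((2 * σ ^ 2)⁻¹ / 2) * rexp (-((2 * σ ^ 2)⁻¹ / 4 * ‖y - x₀‖ ^ 2)))) :=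
          mul_le_mul_of_nonneg_left (mul_le_mul_of_nonneg_left h3 (by positivity))
            (by positivity)
      _ = (C * (2 * π * σ ^ 2) ^ (-(d : ℝ) / 2) / σ ^ 2 *
            (Real.sqrt ((2 * σ ^ 2)⁻¹))⁻¹ * rexp ((2 * σ ^ 2)⁻¹ / 2)) *
          rexp (-((2 * σ ^ 2)⁻¹ / 4 * ‖y - x₀‖ ^ 2)) := by ring
  · -- integrability of bound
    exact (hgint (by positivity)).const_mul _
  · -- differentiability
    refine Filter.Eventually.of_forall fun y => fun x _ => ?_
    exact stein_deriv hσ (f y) y x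

theorem stein_first_order (d : ℕ) (hd : 0 < d) (σ : ℝ) (hσ : 0 < σ)
    (f : EuclideanSpace ℝ (Fin d) → ℝ) (hf : Measurable f)
    (C : ℝ) (hbd : ∀ x, |f x| ≤ C)
    (u : EuclideanSpace ℝ (Fin d) → ℝ)
    (hu : ∀ x, u x = ∫ δ, f (x + δ) ∂(gaussianMeasure d σ)) :
    ∀ x, DifferentiableAt ℝ u x ∧
      gradient u x = ∫ δ, (f (x + δ) / σ ^ 2) • δ ∂(gaussianMeasure d σ) := by
  intro x₀
  have hσ2 : (0 : ℝ) < σ ^ 2 := by positivity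
  have hueq : u = fun x => ∫ y, f y *
      ((2 * π * σ ^ 2) ^ (-(d : ℝ) / 2) * rexp (-((2 * σ ^ 2)⁻¹ * ‖y - x‖ ^ 2))) := by
    funext x
    rw [hu x, stein_integral_gaussianMeasure' hσ,
      ← integral_add_right_eq_self (μ := volume) (fun y => f y *
        ((2 * π * σ ^ 2) ^ (-(d : ℝ) / 2) * rexp (-((2 * σ ^ 2)⁻¹ * ‖y - x‖ ^ 2)))) x]
    congr 1
    funext δ
    rw [add_sub_cancel_right, add_comm δ x, smul_eq_mul, mul_comm]
  rw [hueq]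
  have H := stein_core hσ hf hbd x₀
  refine ⟨H.differentiableAt, ?_⟩
  have hgrad := (hasFDerivAt_iff_hasGradientAt.mp H).gradient
  rw [hgrad]
  have hcomm : (InnerProductSpace.toDual ℝ (EuclideanSpace ℝ (Fin d))).symm
        (∫ y, (f y * ((2 * π * σ ^ 2) ^ (-(d : ℝ) / 2) *
          rexp (-((2 * σ ^ 2)⁻¹ * ‖y - x₀‖ ^ 2))) / σ ^ 2) • innerSL ℝ (y - x₀))
      = ∫ y, (InnerProductSpace.toDual ℝ (EuclideanSpace ℝ (Fin d))).symm
          ((f y * ((2 * π * σ ^ 2) ^ (-(d : ℝ) / 2) *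
            rexp (-((2 * σ ^ 2)⁻¹ * ‖y - x₀‖ ^ 2))) / σ ^ 2) • innerSL ℝ (y - x₀)) :=
    (LinearIsometry.integral_comp_comm
      ((InnerProductSpace.toDual ℝ (EuclideanSpace ℝ (Fin d))).symm.toLinearIsometry) _).symm
  rw [hcomm]
  have hpt : ∀ (r : ℝ) (z : EuclideanSpace ℝ (Fin d)),
      (InnerProductSpace.toDual ℝ (EuclideanSpace ℝ (Fin d))).symm (r • innerSL ℝ z)
        = r • z := by
    intro r z
    have hz : (InnerProductSpace.toDual ℝ (EuclideanSpace ℝ (Fin d))) (r • z)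
        = r • innerSL ℝ z := by
      ext w
      simp [InnerProductSpace.toDual_apply_apply, inner_smul_left]
    rw [← hz, LinearIsometryEquiv.symm_apply_apply]
  simp only [hpt]
  rw [stein_integral_gaussianMeasure' hσ (fun δ => (f (x₀ + δ) / σ ^ 2) • δ)]
  rw [← integral_add_right_eq_self (μ := volume) (fun y => (f y *
      ((2 * π * σ ^ 2) ^ (-(d : ℝ) / 2) * rexp (-((2 * σ ^ 2)⁻¹ * ‖y - x₀‖ ^ 2))) / σ ^ 2) •
      (y - x₀)) x₀]
  congr 1
  funext δ
  rw [add_sub_cancel_right, add_comm δ x₀, smul_smul]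
  congr 1
  ring
end

section
/- Let f : ℝ^d → ℝ be a bounded measurable function with F = sup_{x∈ℝ^d} |f(x)|, σ > 0, and u(x) = E_{δ∼N(0,σ²I)}[f(x+δ)]. Then u is Lipschitz continuous with respect to the Euclidean (ℓ²) norm with Lipschitz constant (F/σ)·√(2/π), i.e., |u(x) − u(y)| ≤ (F/σ)·√(2/π)·‖x − y‖₂ for all x, y ∈ ℝ^d. -/
open MeasureTheory Real

open scoped NNReal ENNReal

noncomputable def g1 (σ t : ℝ) : ℝ :=
  (2 * π * σ ^ 2) ^ (-(1:ℝ) / 2) * Real.exp (-t ^ 2 / (2 * σ ^ 2))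

noncomputable def gdens (d : ℕ) (σ : ℝ) (δ : EuclideanSpace ℝ (Fin d)) : ℝ :=
  (2 * π * σ ^ 2) ^ (-(d : ℝ) / 2) * Real.exp (-‖δ‖ ^ 2 / (2 * σ ^ 2))

lemma g1_pos {σ : ℝ} (hσ : 0 < σ) (t : ℝ) : 0 < g1 σ t := by
  have h : (0:ℝ) < 2 * π * σ ^ 2 := by positivity
  unfold g1; positivity

lemma g1_integrable {σ : ℝ} (hσ : 0 < σ) : Integrable (g1 σ) := by
  have hb : (0:ℝ) < 1 / (2 * σ ^ 2) := by positivity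
  have := (integrable_exp_neg_mul_sq hb).const_mul ((2 * π * σ ^ 2) ^ (-(1:ℝ) / 2))
  convert this using 2 with t
  unfold g1
  congr 1
  field_simp

lemma g1_integral {σ : ℝ} (hσ : 0 < σ) : ∫ t, g1 σ t = 1 := by
  have hb : (0:ℝ) < 1 / (2 * σ ^ 2) := by positivity
  have h2 : (0:ℝ) < 2 * π * σ ^ 2 := by positivity
  unfold g1
  have : (fun t : ℝ => Real.exp (-t ^ 2 / (2 * σ ^ 2)))
      = fun t : ℝ => Real.exp (-(1 / (2 * σ ^ 2)) * t ^ 2) := by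
    funext t; congr 1; field_simp
  rw [MeasureTheory.integral_const_mul, this, integral_gaussian]
  have h3 : π / (1 / (2 * σ ^ 2)) = 2 * π * σ ^ 2 := by field_simp
  rw [h3, Real.sqrt_eq_rpow, ← Real.rpow_add h2]
  norm_num

lemma gdens_prod (d : ℕ) {σ : ℝ} (hσ : 0 < σ) (δ : EuclideanSpace ℝ (Fin d)) :
    gdens d σ δ = ∏ i, g1 σ (δ i) := by
  have h2 : (0:ℝ) < 2 * π * σ ^ 2 := by positivity
  have hnorm : ‖δ‖ ^ 2 = ∑ i, (δ i) ^ 2 := by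
    rw [EuclideanSpace.norm_eq, Real.sq_sqrt]
    · simp [sq_abs]
    · positivity
  unfold gdens g1
  rw [Finset.prod_mul_distrib, Finset.prod_const, ← Real.exp_sum, hnorm]
  congr 1
  · rw [← Real.rpow_natCast ((2 * π * σ ^ 2) ^ (-(1:ℝ)/2)), ← Real.rpow_mul h2.le]
    simp; ring
  · congr 1
    rw [← Finset.sum_div, Finset.sum_neg_distrib]

lemma g1_anti {σ : ℝ} (hσ : 0 < σ) {s t : ℝ} (h : s ^ 2 ≤ t ^ 2) : g1 σ t ≤ g1 σ s := by
  have h2 : (0:ℝ) < 2 * π * σ ^ 2 := by positivity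
  unfold g1
  apply mul_le_mul_of_nonneg_left _ (by positivity)
  apply Real.exp_le_exp.2
  have : (0:ℝ) < 2 * σ ^ 2 := by positivity
  rw [div_le_div_iff_of_pos_right this]
  linarith

lemma g1_le_const {σ : ℝ} (hσ : 0 < σ) (t : ℝ) :
    g1 σ t ≤ (2 * π * σ ^ 2) ^ (-(1:ℝ) / 2) := by
  have h2 : (0:ℝ) < 2 * π * σ ^ 2 := by positivity
  unfold g1
  nth_rewrite 2 [← mul_one ((2 * π * σ ^ 2) ^ (-(1:ℝ) / 2))]
  apply mul_le_mul_of_nonneg_left _ (by positivity)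
  rw [Real.exp_le_one_iff]
  exact div_nonpos_of_nonpos_of_nonneg (neg_nonpos.2 (sq_nonneg t)) (by positivity)

lemma two_c_eq {σ : ℝ} (hσ : 0 < σ) :
    2 * (2 * π * σ ^ 2) ^ (-(1:ℝ) / 2) = Real.sqrt (2 / π) / σ := by
  have h2 : (0:ℝ) < 2 * π * σ ^ 2 := by positivity
  have hpi := Real.pi_pos
  rw [show (-(1:ℝ)/2) = -(1/2) by norm_num, Real.rpow_neg h2.le, ← Real.sqrt_eq_rpow]
  have hs : Real.sqrt (2 * π * σ ^ 2) > 0 := Real.sqrt_pos.2 h2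
  rw [eq_div_iff hσ.ne', mul_comm 2 ((√(2 * π * σ ^ 2))⁻¹), mul_assoc,
    inv_mul_eq_div, div_eq_iff hs.ne', ← Real.sqrt_mul (by positivity)]
  rw [show 2 / π * (2 * π * σ ^ 2) = (2 * σ)^2 by field_simp]
  rw [Real.sqrt_sq (by positivity)]

lemma oneDim_bound {σ : ℝ} (hσ : 0 < σ) {a : ℝ} (ha : 0 ≤ a) :
    ∫ t, |g1 σ t - g1 σ (t + a)| ≤ Real.sqrt (2 / π) / σ * a := by
  have hg : Integrable (g1 σ) := g1_integrable hσ
  have hga : Integrable (fun t => g1 σ (t + a)) := hg.comp_add_right a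
  have hle : -a/2 ≤ a/2 := by linarith
  have habs : Integrable (fun t => |g1 σ t - g1 σ (t + a)|) := by
    have := (hg.sub hga).abs
    simpa [Pi.sub_apply] using this
  -- split the integral
  rw [← intervalIntegral.integral_Iio_add_Ici (b := -a/2) habs.integrableOn
      habs.integrableOn]
  have hIio : ∫ t in Set.Iio (-a/2), |g1 σ t - g1 σ (t + a)|
      = (∫ t in Set.Iio (-a/2), g1 σ (t + a)) - ∫ t in Set.Iio (-a/2), g1 σ t := by
    rw [← integral_sub hga.integrableOn hg.integrableOn]
    apply setIntegral_congr_fun measurableSet_Iio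
    intro t ht
    have ht' : t < -a/2 := ht
    have h1 : g1 σ t ≤ g1 σ (t + a) := g1_anti hσ (by nlinarith)
    dsimp only
    rw [abs_of_nonpos (by linarith)]; ring
  have hIci : ∫ t in Set.Ici (-a/2), |g1 σ t - g1 σ (t + a)|
      = (∫ t in Set.Ici (-a/2), g1 σ t) - ∫ t in Set.Ici (-a/2), g1 σ (t + a) := by
    rw [← integral_sub hg.integrableOn hga.integrableOn]
    apply setIntegral_congr_fun measurableSet_Ici
    intro t ht
    have ht' : -a/2 ≤ t := ht
    have h1 : g1 σ (t + a) ≤ g1 σ t := g1_anti hσ (by nlinarith)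
    dsimp only
    rw [abs_of_nonneg (by linarith)]
  -- shift the translated integrals
  have hmp : MeasurePreserving (fun t : ℝ => t + a) volume volume :=
    measurePreserving_add_right volume a
  have hemb : MeasurableEmbedding (fun t : ℝ => t + a) :=
    (Homeomorph.addRight a).measurableEmbedding
  have hshift1 : ∫ t in Set.Iio (-a/2), g1 σ (t + a) = ∫ t in Set.Iio (a/2), g1 σ t := by
    rw [← hmp.setIntegral_preimage_emb hemb (g1 σ) (Set.Iio (a/2))]
    congr 1
    rw [Set.preimage_add_const_Iio]; congr 1; ring
  have hshift2 : ∫ t in Set.Ici (-a/2), g1 σ (t + a) = ∫ t in Set.Ici (a/2), g1 σ t := by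
    rw [← hmp.setIntegral_preimage_emb hemb (g1 σ) (Set.Ici (a/2))]
    congr 1
    rw [Set.preimage_add_const_Ici]; congr 1; ring
  -- the two differences are both the integral over Ico (-a/2) (a/2)
  have hdisj1 : Disjoint (Set.Iio (-a/2)) (Set.Ico (-a/2) (a/2)) :=
    Set.disjoint_left.2 fun x hx h2 => absurd h2.1 (not_le.2 hx)
  have hdisj2 : Disjoint (Set.Ico (-a/2) (a/2)) (Set.Ici (a/2)) :=
    Set.disjoint_left.2 fun x hx h2 => absurd hx.2 (not_lt.2 h2)
  have hunion1 : ∫ t in Set.Iio (a/2), g1 σ t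
      = (∫ t in Set.Iio (-a/2), g1 σ t) + ∫ t in Set.Ico (-a/2) (a/2), g1 σ t := by
    rw [← setIntegral_union hdisj1 measurableSet_Ico
      hg.integrableOn hg.integrableOn, Set.Iio_union_Ico_eq_Iio hle]
  have hunion2 : ∫ t in Set.Ici (-a/2), g1 σ t
      = (∫ t in Set.Ico (-a/2) (a/2), g1 σ t) + ∫ t in Set.Ici (a/2), g1 σ t := by
    rw [← setIntegral_union hdisj2 measurableSet_Ici
      hg.integrableOn hg.integrableOn, Set.Ico_union_Ici_eq_Ici hle]
  -- bound the middle integral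
  have hmid : ∫ t in Set.Ico (-a/2) (a/2), g1 σ t ≤ (2 * π * σ ^ 2) ^ (-(1:ℝ)/2) * a := by
    have h1 : ∫ t in Set.Ico (-a/2) (a/2), g1 σ t
        ≤ ∫ _t in Set.Ico (-a/2) (a/2), (2 * π * σ ^ 2) ^ (-(1:ℝ)/2) := by
      apply setIntegral_mono_on hg.integrableOn (integrableOn_const (by
        rw [Real.volume_Ico]; exact ENNReal.ofReal_ne_top)) measurableSet_Ico
      intro t _; exact g1_le_const hσ t
    refine h1.trans_eq ?_
    rw [setIntegral_const, Real.volume_real_Ico_of_le (by linarith), smul_eq_mul]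
    ring_nf
  rw [hIio, hIci, hshift1, hshift2, hunion1, hunion2]
  have := two_c_eq hσ
  nlinarith [hmid]

lemma gdens_shift (d : ℕ) (hd : 0 < d) {σ : ℝ} (hσ : 0 < σ) (h : EuclideanSpace ℝ (Fin d)) :
    ∫ δ, |gdens d σ δ - gdens d σ (δ + h)| ≤ Real.sqrt (2 / π) / σ * ‖h‖ := by
  rcases eq_or_ne h 0 with rfl | hne
  · simp
  · set a : ℝ := ‖h‖ with ha_def
    have ha : 0 < a := norm_pos_iff.2 hne
    set i0 : Fin d := ⟨0, hd⟩ with hi0_def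
    set v : EuclideanSpace ℝ (Fin d) := a⁻¹ • h with hv_def
    have hv : ‖v‖ = 1 := by
      rw [hv_def, norm_smul, norm_inv, norm_norm, ← ha_def, inv_mul_cancel₀ ha.ne']
    -- an orthonormal basis whose `i0`-th vector is `v`
    have hon : Orthonormal ℝ (Set.restrict {i0} (fun _ : Fin d => v)) := by
      constructor
      · intro i; exact hv
      · intro i j hij
        exact absurd (Subtype.ext ((i.2 : (i : Fin d) = i0).trans
          ((j.2 : (j : Fin d) = i0)).symm)) hij
    have hcard : Module.finrank ℝ (EuclideanSpace ℝ (Fin d)) = Fintype.card (Fin d) := by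
      simp [finrank_euclideanSpace]
    obtain ⟨b, hb⟩ := hon.exists_orthonormalBasis_extension_of_card_eq hcard
    have hb0 : b i0 = v := hb i0 rfl
    set e := b.repr with he_def
    set w0 : EuclideanSpace ℝ (Fin d) := a • EuclideanSpace.single i0 (1:ℝ) with hw0_def
    set q : EuclideanSpace ℝ (Fin d) → ℝ :=
      fun w => |gdens d σ w - gdens d σ (w + w0)| with hq_def
    have step1 : ∫ δ, |gdens d σ δ - gdens d σ (δ + h)| = ∫ w, q w := by
      rw [← b.measurePreserving_repr.integral_comp
        b.repr.toHomeomorph.measurableEmbedding q]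
      congr 1 with δ
      have h1 : gdens d σ (e δ) = gdens d σ δ := by
        unfold gdens; rw [LinearIsometryEquiv.norm_map]
      have h2 : e δ + w0 = e (δ + h) := by
        rw [map_add, hw0_def]
        congr 1
        have : h = a • v := by
          rw [hv_def, smul_smul, mul_inv_cancel₀ ha.ne', one_smul]
        rw [this, _root_.map_smul, ← hb0, he_def, b.repr_self]
      rw [hq_def]
      dsimp only [Function.comp_apply]
      rw [h1, h2]
      congr 1
      unfold gdens
      rw [LinearIsometryEquiv.norm_map]
    set G : Fin d → ℝ → ℝ :=
      fun i => if i = i0 then (fun t => |g1 σ t - g1 σ (t + a)|) else g1 σ with hG_def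
    have step2 : ∫ w, q w = ∫ p : Fin d → ℝ, ∏ i, G i (p i) := by
      rw [← ((EuclideanSpace.volume_preserving_symm_measurableEquiv_toLp (Fin d)).symm).integral_comp
        (MeasurableEquiv.measurableEmbedding _) q]
      congr 1 with p
      have hcoord : ∀ i, ((MeasurableEquiv.toLp 2 (Fin d → ℝ)).symm.symm p) i = p i := by
        intro i; rfl
      have hcoord2 : ∀ i, (((MeasurableEquiv.toLp 2 (Fin d → ℝ)).symm.symm p) + w0) i
          = p i + (if i = i0 then a else 0) := by
        intro i
        have : w0 i = if i = i0 then a else 0 := by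
          rw [hw0_def]
          simp [EuclideanSpace.single_apply, mul_ite]
        rw [← this, ← hcoord i]; rfl
      rw [hq_def]
      dsimp only [Function.comp_apply]
      rw [gdens_prod d hσ, gdens_prod d hσ]
      simp_rw [hcoord, hcoord2]
      -- split off the i0 factor
      rw [← Finset.mul_prod_erase Finset.univ _ (Finset.mem_univ i0),
        ← Finset.mul_prod_erase Finset.univ
          (fun i => g1 σ (p i + if i = i0 then a else 0)) (Finset.mem_univ i0),
        ← Finset.mul_prod_erase Finset.univ (fun i => G i (p i)) (Finset.mem_univ i0)]
      have hrest : ∏ i ∈ Finset.univ.erase i0, g1 σ (p i + if i = i0 then a else 0)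
          = ∏ i ∈ Finset.univ.erase i0, g1 σ (p i) := by
        apply Finset.prod_congr rfl
        intro i hi
        rw [if_neg (Finset.ne_of_mem_erase hi), add_zero]
      have hrestG : ∏ i ∈ Finset.univ.erase i0, G i (p i)
          = ∏ i ∈ Finset.univ.erase i0, g1 σ (p i) := by
        apply Finset.prod_congr rfl
        intro i hi
        simp only [hG_def, if_neg (Finset.ne_of_mem_erase hi)]
      rw [hrest, hrestG]
      simp only [hG_def, eq_self_iff_true, if_true]
      rw [← sub_mul, abs_mul]
      congr 1
      rw [abs_of_nonneg (Finset.prod_nonneg fun i _ => (g1_pos hσ (p i)).le)]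
    rw [step1, step2, MeasureTheory.integral_fintype_prod_volume_eq_prod G]
    rw [← Finset.mul_prod_erase Finset.univ (fun i => ∫ t, G i t) (Finset.mem_univ i0)]
    have h1 : ∀ i ∈ Finset.univ.erase i0, (∫ t, G i t) = 1 := by
      intro i hi
      simp only [hG_def, if_neg (Finset.ne_of_mem_erase hi)]
      exact g1_integral hσ
    rw [Finset.prod_congr rfl h1, Finset.prod_const_one, mul_one]
    have : (∫ t, G i0 t) = ∫ t, |g1 σ t - g1 σ (t + a)| := by
      rw [hG_def]; simp
    rw [this]
    exact oneDim_bound hσ ha.le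

lemma gdens_measurable (d : ℕ) (σ : ℝ) : Measurable (gdens d σ) := by
  unfold gdens; fun_prop

lemma gdens_nonneg (d : ℕ) (σ : ℝ) (δ : EuclideanSpace ℝ (Fin d)) : 0 ≤ gdens d σ δ := by
  unfold gdens; positivity

lemma gdens_integrable (d : ℕ) {σ : ℝ} (hσ : 0 < σ) : Integrable (gdens d σ) := by
  rw [← ((EuclideanSpace.volume_preserving_symm_measurableEquiv_toLp (Fin d)).symm).integrable_comp_emb
      (MeasurableEquiv.measurableEmbedding _)]
  have : (gdens d σ) ∘ (MeasurableEquiv.toLp 2 (Fin d → ℝ)).symm.symm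
      = fun p : Fin d → ℝ => ∏ i, g1 σ (p i) := by
    funext p; rw [Function.comp_apply, gdens_prod d hσ]; rfl
  rw [this]
  exact Integrable.fintype_prod (f := fun _ t => g1 σ t) (fun _ => g1_integrable hσ)

theorem gaussian_smoothing_lipschitz (d : ℕ) (hd : 0 < d) (σ : ℝ) (hσ : 0 < σ)
    (f : EuclideanSpace ℝ (Fin d) → ℝ) (hf : Measurable f)
    (F : ℝ) (hF : ∀ x, |f x| ≤ F)
    (u : EuclideanSpace ℝ (Fin d) → ℝ)
    (hu : ∀ x, u x = ∫ δ, f (x + δ) ∂(gaussianMeasure d σ)) :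
    ∀ x y, |u x - u y| ≤ F / σ * Real.sqrt (2 / π) * ‖x - y‖ := by
  intro x y
  have hF0 : 0 ≤ F := le_trans (abs_nonneg _) (hF 0)
  have hPm : Measurable (gdens d σ) := gdens_measurable d σ
  have hPi : Integrable (gdens d σ) := gdens_integrable d hσ
  have hrepr : ∀ z, u z = ∫ δ, gdens d σ δ * f (z + δ) := by
    intro z
    rw [hu z]
    unfold gaussianMeasure
    have hmeq : (fun δ : EuclideanSpace ℝ (Fin d) =>
        ENNReal.ofReal ((2 * π * σ ^ 2) ^ (-(d : ℝ) / 2) * Real.exp (-‖δ‖ ^ 2 / (2 * σ ^ 2))))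
        = fun δ => ((Real.toNNReal (gdens d σ δ) : ℝ≥0) : ℝ≥0∞) := by
      funext δ; rfl
    rw [hmeq, integral_withDensity_eq_integral_smul hPm.real_toNNReal]
    congr 1 with δ
    rw [NNReal.smul_def, smul_eq_mul, Real.coe_toNNReal _ (gdens_nonneg d σ δ)]
  have hint : ∀ z, Integrable (fun δ => gdens d σ δ * f (z + δ)) := by
    intro z
    apply Integrable.mono' (hPi.const_mul F)
    · exact (hPm.mul (hf.comp (measurable_id.const_add z))).aestronglyMeasurable
    · filter_upwards with δ
      rw [Real.norm_eq_abs, abs_mul, abs_of_nonneg (gdens_nonneg d σ δ), mul_comm F]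
      exact mul_le_mul_of_nonneg_left (hF _) (gdens_nonneg d σ δ)
  have hint2 : Integrable (fun δ => gdens d σ (δ + (x - y)) * f (x + δ)) := by
    apply Integrable.mono' ((hPi.comp_add_right (x - y)).const_mul F)
    · exact ((hPm.comp (measurable_id.add_const (x - y))).mul
        (hf.comp (measurable_id.const_add x))).aestronglyMeasurable
    · filter_upwards with δ
      rw [Real.norm_eq_abs, abs_mul, abs_of_nonneg (gdens_nonneg d σ _), mul_comm F]
      exact mul_le_mul_of_nonneg_left (hF _) (gdens_nonneg d σ _)
  have huy : u y = ∫ δ, gdens d σ (δ + (x - y)) * f (x + δ) := by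
    rw [hrepr y]
    rw [← integral_add_right_eq_self (μ := volume)
      (fun δ => gdens d σ δ * f (y + δ)) (x - y)]
    congr 1 with δ
    congr 2
    abel
  have hkey : u x - u y = ∫ δ, (gdens d σ δ - gdens d σ (δ + (x - y))) * f (x + δ) := by
    rw [hrepr x, huy, ← integral_sub (hint x) hint2]
    congr 1 with δ
    ring
  have hdm : Integrable (fun δ => (gdens d σ δ - gdens d σ (δ + (x - y))) * f (x + δ)) := by
    have h2 := (hint x).sub hint2
    exact h2.congr (ae_of_all _ fun δ => by simp only [Pi.sub_apply]; ring)
  have habsint : Integrable (fun δ => |gdens d σ δ - gdens d σ (δ + (x - y))|) :=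
    (hPi.sub (hPi.comp_add_right (x - y))).abs
  rw [hkey]
  calc |∫ δ, (gdens d σ δ - gdens d σ (δ + (x - y))) * f (x + δ)|
      ≤ ∫ δ, |(gdens d σ δ - gdens d σ (δ + (x - y))) * f (x + δ)| := by
        simpa only [Real.norm_eq_abs] using MeasureTheory.norm_integral_le_integral_norm (μ := volume)
          (fun δ => (gdens d σ δ - gdens d σ (δ + (x - y))) * f (x + δ))
    _ ≤ ∫ δ, |gdens d σ δ - gdens d σ (δ + (x - y))| * F := by
        apply integral_mono hdm.abs (habsint.mul_const F)
        intro δ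
        dsimp only
        rw [abs_mul]
        exact mul_le_mul_of_nonneg_left (hF _) (abs_nonneg _)
    _ = (∫ δ, |gdens d σ δ - gdens d σ (δ + (x - y))|) * F := integral_mul_const _ _
    _ ≤ (Real.sqrt (2 / π) / σ * ‖x - y‖) * F := by
        apply mul_le_mul_of_nonneg_right _ hF0
        exact gdens_shift d hd hσ (x - y)
    _ = F / σ * Real.sqrt (2 / π) * ‖x - y‖ := by ring
end

section
/- Let f : ℝ^d → ℝ be a bounded measurable function, σ > 0, and u(x) = E_{δ∼N(0,σ²I)}[f(x+δ)]. For any indices i ≠ j in {1,…,d}, the mixed second-order partial derivative of u satisfies ∂²u/∂x_i∂x_j (x) = E_{δ∼N(0,σ²I)}[(δ_i δ_j / σ⁴) · f(x+δ)]. -/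
open MeasureTheory Real
open scoped ENNReal NNReal
set_option synthInstance.maxHeartbeats 1000000
set_option maxHeartbeats 1000000

lemma gauss_int (d : ℕ) (σ : ℝ) (φ : EuclideanSpace ℝ (Fin d) → ℝ) :
    ∫ δ, φ δ ∂(gaussianMeasure d σ) =
      ∫ δ, ((2 * π * σ ^ 2) ^ (-(d : ℝ) / 2) * Real.exp (-‖δ‖ ^ 2 / (2 * σ ^ 2))) * φ δ := by
  have hmeas : Measurable fun δ : EuclideanSpace ℝ (Fin d) =>
      ((2 * π * σ ^ 2) ^ (-(d : ℝ) / 2) * Real.exp (-‖δ‖ ^ 2 / (2 * σ ^ 2))).toNNReal := by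
    apply Measurable.real_toNNReal
    exact (continuous_const.mul ((continuous_norm.pow 2).neg.div_const _).rexp).measurable
  have hrw : gaussianMeasure d σ = volume.withDensity fun δ =>
      (((2 * π * σ ^ 2) ^ (-(d : ℝ) / 2) *
        Real.exp (-‖δ‖ ^ 2 / (2 * σ ^ 2))).toNNReal : ℝ≥0∞) := rfl
  rw [hrw, integral_withDensity_eq_integral_smul hmeas]
  congr 1
  ext δ
  rw [NNReal.smul_def, smul_eq_mul, Real.coe_toNNReal]
  positivity

/-! ### Auxiliary definitions -/

noncomputable def gaussAux (d : ℕ) (σ c₀ : ℝ) (δ : EuclideanSpace ℝ (Fin d)) : ℝ :=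
  c₀ * Real.exp (-(2 * σ ^ 2)⁻¹ * ‖δ‖ ^ 2)

noncomputable def gA (d : ℕ) (σ c₀ : ℝ) (f : EuclideanSpace ℝ (Fin d) → ℝ)
    (z y : EuclideanSpace ℝ (Fin d)) : EuclideanSpace ℝ (Fin d) →L[ℝ] ℝ :=
  (f z * gaussAux d σ c₀ (z - y) / σ ^ 2) • innerSL ℝ (z - y)

noncomputable def gB (d : ℕ) (σ c₀ : ℝ) (f : EuclideanSpace ℝ (Fin d) → ℝ) (j : Fin d)
    (z y : EuclideanSpace ℝ (Fin d)) : EuclideanSpace ℝ (Fin d) →L[ℝ] ℝ :=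
  ((z - y) j * (f z / σ ^ 2) * (gaussAux d σ c₀ (z - y) / σ ^ 2)) • innerSL ℝ (z - y)
    - (f z / σ ^ 2 * gaussAux d σ c₀ (z - y)) • innerSL ℝ (EuclideanSpace.single j (1 : ℝ))

lemma gaussAux_continuous (d : ℕ) (σ c₀ : ℝ) : Continuous (gaussAux d σ c₀) := by
  unfold gaussAux; fun_prop

lemma gaussAux_nonneg (d : ℕ) (σ c₀ : ℝ) (hc₀ : 0 ≤ c₀) (δ : EuclideanSpace ℝ (Fin d)) :
    0 ≤ gaussAux d σ c₀ δ := by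
  unfold gaussAux; positivity

/-! ### Integrability lemmas -/

lemma integrable_gauss_basic (d : ℕ) (b : ℝ) (hb : 0 < b) :
    Integrable (fun v : EuclideanSpace ℝ (Fin d) => Real.exp (-b * ‖v‖ ^ 2)) volume := by
  have h := (GaussianFourier.integrable_cexp_neg_mul_sq_norm_add (V := EuclideanSpace ℝ (Fin d))
    (b := (b : ℂ)) (by simpa using hb) 0 0).norm
  refine h.congr ?_
  filter_upwards with v
  simp [Complex.norm_exp, ← Complex.ofReal_pow, neg_mul]

lemma integrable_poly_gauss (d : ℕ) (k : ℕ) (b : ℝ) (hb : 0 < b) :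
    Integrable (fun v : EuclideanSpace ℝ (Fin d) =>
      (‖v‖ + 1) ^ k * Real.exp (-b * ‖v‖ ^ 2)) volume := by
  have h0 := (integrable_gauss_basic d (b / 2) (by positivity)).const_mul
    ((k.factorial : ℝ) * Real.exp (1 + 1 / b))
  refine Integrable.mono' h0 ?_ ?_
  · apply Continuous.aestronglyMeasurable
    fun_prop
  · filter_upwards with v
    have ht : (0:ℝ) ≤ ‖v‖ := norm_nonneg _
    set t := ‖v‖ with hts
    rw [Real.norm_eq_abs, abs_of_nonneg (by positivity)]
    have h1 : (t + 1) ^ k ≤ (k.factorial : ℝ) * Real.exp (t + 1) := by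
      have h2 := Real.pow_div_factorial_le_exp (x := t + 1) (by linarith) k
      have hk : (0:ℝ) < k.factorial := by exact_mod_cast k.factorial_pos
      rw [div_le_iff₀ hk] at h2
      linarith [h2]
    calc (t + 1) ^ k * Real.exp (-b * t ^ 2)
        ≤ (k.factorial : ℝ) * Real.exp (t + 1) * Real.exp (-b * t ^ 2) :=
          mul_le_mul_of_nonneg_right h1 (Real.exp_nonneg _)
      _ = (k.factorial : ℝ) * Real.exp (t + 1 + -b * t ^ 2) := by
          rw [mul_assoc, ← Real.exp_add]
      _ ≤ (k.factorial : ℝ) * Real.exp (1 + 1 / b + -(b / 2) * t ^ 2) := by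
          refine mul_le_mul_of_nonneg_left ((Real.exp_le_exp).2 ?_) (by positivity)
          have h2b : (0:ℝ) < 2 * b := by linarith
          have key : t ≤ b / 2 * t ^ 2 + 1 / b := by
            rw [← mul_le_mul_iff_right₀ h2b]
            have heq : 2 * b * (b / 2 * t ^ 2 + 1 / b) = b ^ 2 * t ^ 2 + 2 := by
              field_simp
            rw [heq]
            nlinarith [sq_nonneg (b * t - 1)]
          nlinarith [key]
      _ = (k.factorial : ℝ) * Real.exp (1 + 1 / b) * Real.exp (-(b / 2) * t ^ 2) := by
          rw [mul_assoc, ← Real.exp_add]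

lemma integrable_poly_gauss_shift (d : ℕ) (k : ℕ) (b K : ℝ) (hb : 0 < b)
    (x₀ : EuclideanSpace ℝ (Fin d)) :
    Integrable (fun z : EuclideanSpace ℝ (Fin d) =>
      K * ((‖z - x₀‖ + 1) ^ k * Real.exp (-b * ‖z - x₀‖ ^ 2))) volume :=
  (((integrable_poly_gauss d k b hb).const_mul K).comp_sub_right x₀)

lemma exp_sq_bound (cb t s : ℝ) (hcb : 0 < cb) (ht : 0 ≤ t) (hs : 0 ≤ s) (hst : s ≤ t + 1) :
    Real.exp (-cb * t ^ 2) ≤ Real.exp cb * Real.exp (-(cb / 2) * s ^ 2) := by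
  rw [← Real.exp_add]
  apply Real.exp_le_exp.2
  have h1 : s ^ 2 ≤ 2 + 2 * t ^ 2 := by nlinarith [sq_nonneg (t - 1)]
  nlinarith [mul_le_mul_of_nonneg_left h1 (le_of_lt (half_pos hcb))]

/-! ### Derivative of the Gaussian kernel -/

lemma hasFDerivAt_gaussAux (d : ℕ) (σ : ℝ) (hσ : 0 < σ) (c₀ : ℝ)
    (z y : EuclideanSpace ℝ (Fin d)) :
    HasFDerivAt (fun y : EuclideanSpace ℝ (Fin d) => gaussAux d σ c₀ (z - y))
      ((gaussAux d σ c₀ (z - y) / σ ^ 2) • innerSL ℝ (z - y)) y := by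
  have hσ2 : σ ^ 2 ≠ 0 := by positivity
  unfold gaussAux
  have hsub : HasFDerivAt (fun y : EuclideanSpace ℝ (Fin d) => z - y)
      (-(ContinuousLinearMap.id ℝ (EuclideanSpace ℝ (Fin d)))) y :=
    (hasFDerivAt_id y).const_sub z
  have hns := HasFDerivAt.norm_sq hsub
  have h1 := hns.const_mul (-(2 * σ ^ 2)⁻¹)
  have h2 := h1.exp
  have h3 := h2.const_mul c₀
  refine h3.congr_fderiv ?_
  ext v
  simp only [ContinuousLinearMap.smul_apply, ContinuousLinearMap.comp_apply,
    ContinuousLinearMap.neg_apply, ContinuousLinearMap.id_apply, innerSL_apply_apply,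
    smul_eq_mul, two_smul, ContinuousLinearMap.add_apply, inner_neg_right]
  field_simp
  ring

lemma hasFDerivAt_coord (d : ℕ) (j : Fin d) (z y : EuclideanSpace ℝ (Fin d)) :
    HasFDerivAt (fun y : EuclideanSpace ℝ (Fin d) => (z - y) j)
      (-(innerSL ℝ (EuclideanSpace.single j (1 : ℝ)))) y := by
  have hfun : (fun y : EuclideanSpace ℝ (Fin d) => (z - y) j)
      = fun y => (innerSL ℝ (EuclideanSpace.single j (1 : ℝ))) (z - y) := by
    funext w
    simp [EuclideanSpace.inner_single_left]
  rw [hfun]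
  have hsub : HasFDerivAt (fun y : EuclideanSpace ℝ (Fin d) => z - y)
      (-(ContinuousLinearMap.id ℝ (EuclideanSpace ℝ (Fin d)))) y :=
    (hasFDerivAt_id y).const_sub z
  have h := (innerSL ℝ (EuclideanSpace.single j (1 : ℝ))).hasFDerivAt.comp y hsub
  refine h.congr_fderiv ?_
  ext v
  simp
/-! ### Stage 1 -/

lemma norm_gA_le (d : ℕ) (σ : ℝ) (hσ : 0 < σ) (c₀ : ℝ) (hc₀ : 0 ≤ c₀)
    (f : EuclideanSpace ℝ (Fin d) → ℝ) (C : ℝ) (hC : 0 ≤ C) (hbd : ∀ x, |f x| ≤ C)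
    (z y : EuclideanSpace ℝ (Fin d)) :
    ‖gA d σ c₀ f z y‖ ≤ C * c₀ / σ ^ 2 * (‖z - y‖ * Real.exp (-(2 * σ ^ 2)⁻¹ * ‖z - y‖ ^ 2)) := by
  have hσ2 : (0:ℝ) < σ ^ 2 := by positivity
  unfold gA gaussAux
  rw [norm_smul (f z * (c₀ * Real.exp (-(2 * σ ^ 2)⁻¹ * ‖z - y‖ ^ 2)) / σ ^ 2)
      (innerSL ℝ (z - y)),
    innerSL_apply_norm (𝕜 := ℝ), Real.norm_eq_abs, abs_div, abs_mul, abs_mul,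
    abs_of_nonneg hc₀, abs_of_nonneg (Real.exp_nonneg _), abs_of_nonneg hσ2.le]
  calc |f z| * (c₀ * Real.exp (-(2 * σ ^ 2)⁻¹ * ‖z - y‖ ^ 2)) / σ ^ 2 * ‖z - y‖
      ≤ C * (c₀ * Real.exp (-(2 * σ ^ 2)⁻¹ * ‖z - y‖ ^ 2)) / σ ^ 2 * ‖z - y‖ := by
        gcongr
        exact hbd z
    _ = C * c₀ / σ ^ 2 * (‖z - y‖ * Real.exp (-(2 * σ ^ 2)⁻¹ * ‖z - y‖ ^ 2)) := by ring

lemma gA_aesm (d : ℕ) (σ : ℝ) (c₀ : ℝ) (f : EuclideanSpace ℝ (Fin d) → ℝ) (hf : Measurable f)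
    (y : EuclideanSpace ℝ (Fin d)) :
    AEStronglyMeasurable (fun z => gA d σ c₀ f z y) volume := by
  unfold gA
  have h1 : Measurable fun z : EuclideanSpace ℝ (Fin d) =>
      f z * gaussAux d σ c₀ (z - y) / σ ^ 2 :=
    (hf.mul (((gaussAux_continuous d σ c₀).comp
      (continuous_id.sub continuous_const)).measurable)).div_const _
  have h2 : Continuous fun z : EuclideanSpace ℝ (Fin d) => innerSL ℝ (z - y) :=
    (innerSL ℝ).continuous.comp (continuous_id.sub continuous_const)
  exact h1.aestronglyMeasurable.smul h2.aestronglyMeasurable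

lemma int_gA (d : ℕ) (σ : ℝ) (hσ : 0 < σ) (c₀ : ℝ) (hc₀ : 0 ≤ c₀)
    (f : EuclideanSpace ℝ (Fin d) → ℝ) (hf : Measurable f) (C : ℝ) (hC : 0 ≤ C)
    (hbd : ∀ x, |f x| ≤ C) (y : EuclideanSpace ℝ (Fin d)) :
    Integrable (fun z => gA d σ c₀ f z y) volume := by
  have hcb : (0:ℝ) < (2 * σ ^ 2)⁻¹ := by positivity
  refine (integrable_poly_gauss_shift d 2 ((2 * σ ^ 2)⁻¹) (C * c₀ / σ ^ 2) hcb y).mono'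
    (gA_aesm d σ c₀ f hf y) ?_
  filter_upwards with z
  refine (norm_gA_le d σ hσ c₀ hc₀ f C hC hbd z y).trans ?_
  have h1 : ‖z - y‖ ≤ (‖z - y‖ + 1) ^ 2 := by nlinarith [norm_nonneg (z - y)]
  have hKn : (0:ℝ) ≤ C * c₀ / σ ^ 2 := by positivity
  have := mul_le_mul_of_nonneg_right h1 (Real.exp_nonneg (-(2 * σ ^ 2)⁻¹ * ‖z - y‖ ^ 2))
  nlinarith [mul_le_mul_of_nonneg_left this hKn]

lemma stage1 (d : ℕ) (σ : ℝ) (hσ : 0 < σ) (c₀ : ℝ) (hc₀ : 0 ≤ c₀)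
    (f : EuclideanSpace ℝ (Fin d) → ℝ) (hf : Measurable f) (C : ℝ) (hC : 0 ≤ C)
    (hbd : ∀ x, |f x| ≤ C) (y₀ : EuclideanSpace ℝ (Fin d)) :
    HasFDerivAt (fun y => ∫ z, f z * gaussAux d σ c₀ (z - y))
      (∫ z, gA d σ c₀ f z y₀) y₀ := by
  have hσ2 : (0:ℝ) < σ ^ 2 := by positivity
  have hcb : (0:ℝ) < (2 * σ ^ 2)⁻¹ := by positivity
  refine hasFDerivAt_integral_of_dominated_of_fderiv_le
    (F := fun y z => f z * gaussAux d σ c₀ (z - y))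
    (F' := fun y z => gA d σ c₀ f z y)
    (bound := fun z => C * c₀ / σ ^ 2 * Real.exp ((2 * σ ^ 2)⁻¹) *
      ((‖z - y₀‖ + 1) ^ 2 * Real.exp (-((2 * σ ^ 2)⁻¹ / 2) * ‖z - y₀‖ ^ 2)))
    (Metric.ball_mem_nhds y₀ one_pos) ?_ ?_ ?_ ?_ ?_ ?_
  · filter_upwards with y
    exact hf.aestronglyMeasurable.mul (((gaussAux_continuous d σ c₀).comp
      (continuous_id.sub continuous_const)).aestronglyMeasurable)
  · -- integrability of F y₀
    refine (integrable_poly_gauss_shift d 2 ((2 * σ ^ 2)⁻¹) (C * c₀) hcb y₀).mono'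
      (hf.aestronglyMeasurable.mul (((gaussAux_continuous d σ c₀).comp
        (continuous_id.sub continuous_const)).aestronglyMeasurable)) ?_
    filter_upwards with z
    rw [Real.norm_eq_abs, abs_mul]
    have h1 : |gaussAux d σ c₀ (z - y₀)| = c₀ * Real.exp (-(2 * σ ^ 2)⁻¹ * ‖z - y₀‖ ^ 2) := by
      unfold gaussAux
      rw [abs_mul, abs_of_nonneg hc₀, abs_of_nonneg (Real.exp_nonneg _)]
    rw [h1]
    have h2 : (1:ℝ) ≤ (‖z - y₀‖ + 1) ^ 2 := by nlinarith [norm_nonneg (z - y₀)]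
    have h3 : |f z| * (c₀ * Real.exp (-(2 * σ ^ 2)⁻¹ * ‖z - y₀‖ ^ 2))
        ≤ C * (c₀ * Real.exp (-(2 * σ ^ 2)⁻¹ * ‖z - y₀‖ ^ 2)) := by
      gcongr; exact hbd z
    refine h3.trans ?_
    nlinarith [mul_le_mul_of_nonneg_left h2 (mul_nonneg (mul_nonneg hC hc₀)
      (Real.exp_nonneg (-(2 * σ ^ 2)⁻¹ * ‖z - y₀‖ ^ 2)))]
  · exact gA_aesm d σ c₀ f hf y₀
  · -- the uniform bound on the ball
    filter_upwards with z
    intro y hy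
    have hdist : ‖y - y₀‖ < 1 := by
      rw [← dist_eq_norm]; exact Metric.mem_ball.mp hy
    have hst : ‖z - y₀‖ ≤ ‖z - y‖ + 1 := by
      calc ‖z - y₀‖ = ‖(z - y) + (y - y₀)‖ := by abel_nf
        _ ≤ ‖z - y‖ + ‖y - y₀‖ := norm_add_le _ _
        _ ≤ ‖z - y‖ + 1 := by linarith
    have hts : ‖z - y‖ ≤ ‖z - y₀‖ + 1 := by
      calc ‖z - y‖ = ‖(z - y₀) + (y₀ - y)‖ := by abel_nf
        _ ≤ ‖z - y₀‖ + ‖y₀ - y‖ := norm_add_le _ _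
        _ ≤ ‖z - y₀‖ + 1 := by
            have : ‖y₀ - y‖ = ‖y - y₀‖ := norm_sub_rev _ _
            linarith
    refine (norm_gA_le d σ hσ c₀ hc₀ f C hC hbd z y).trans ?_
    have he := exp_sq_bound ((2 * σ ^ 2)⁻¹) ‖z - y‖ ‖z - y₀‖ hcb (norm_nonneg _)
      (norm_nonneg _) hst
    calc C * c₀ / σ ^ 2 * (‖z - y‖ * Real.exp (-(2 * σ ^ 2)⁻¹ * ‖z - y‖ ^ 2))
        ≤ C * c₀ / σ ^ 2 * ((‖z - y₀‖ + 1) *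
            (Real.exp ((2 * σ ^ 2)⁻¹) * Real.exp (-((2 * σ ^ 2)⁻¹ / 2) * ‖z - y₀‖ ^ 2))) := by
          gcongr <;> first
            | positivity
            | exact hts
            | exact he
      _ ≤ C * c₀ / σ ^ 2 * Real.exp ((2 * σ ^ 2)⁻¹) *
            ((‖z - y₀‖ + 1) ^ 2 * Real.exp (-((2 * σ ^ 2)⁻¹ / 2) * ‖z - y₀‖ ^ 2)) := by
          have h1 : (‖z - y₀‖ + 1) ≤ (‖z - y₀‖ + 1) ^ 2 := by nlinarith [norm_nonneg (z - y₀)]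
          have hKn : (0:ℝ) ≤ C * c₀ / σ ^ 2 := by positivity
          nlinarith [mul_le_mul_of_nonneg_right h1
            (Real.exp_nonneg (-((2 * σ ^ 2)⁻¹ / 2) * ‖z - y₀‖ ^ 2)),
            mul_le_mul_of_nonneg_left (mul_le_mul_of_nonneg_right h1
              (Real.exp_nonneg (-((2 * σ ^ 2)⁻¹ / 2) * ‖z - y₀‖ ^ 2)))
              (mul_nonneg hKn (Real.exp_nonneg ((2 * σ ^ 2)⁻¹)))]
  · exact integrable_poly_gauss_shift d 2 ((2 * σ ^ 2)⁻¹ / 2)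
      (C * c₀ / σ ^ 2 * Real.exp ((2 * σ ^ 2)⁻¹)) (by positivity) y₀
  · filter_upwards with z
    intro y hy
    have h := (hasFDerivAt_gaussAux d σ hσ c₀ z y).const_mul (f z)
    refine h.congr_fderiv ?_
    unfold gA
    rw [smul_smul, mul_div_assoc]
/-! ### Stage 2 -/

lemma coord_abs_le (d : ℕ) (j : Fin d) (x : EuclideanSpace ℝ (Fin d)) : |x j| ≤ ‖x‖ := by
  have h := norm_inner_le_norm (𝕜 := ℝ) x (EuclideanSpace.single j (1:ℝ))
  simpa [EuclideanSpace.inner_single_right, EuclideanSpace.norm_single] using h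

lemma norm_gB_le (d : ℕ) (σ : ℝ) (hσ : 0 < σ) (c₀ : ℝ) (hc₀ : 0 ≤ c₀)
    (f : EuclideanSpace ℝ (Fin d) → ℝ) (C : ℝ) (hC : 0 ≤ C) (hbd : ∀ x, |f x| ≤ C) (j : Fin d)
    (z y : EuclideanSpace ℝ (Fin d)) :
    ‖gB d σ c₀ f j z y‖ ≤ C * c₀ * ((σ ^ 2)⁻¹ * (σ ^ 2)⁻¹ + (σ ^ 2)⁻¹) *
      ((‖z - y‖ + 1) ^ 2 * Real.exp (-(2 * σ ^ 2)⁻¹ * ‖z - y‖ ^ 2)) := by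
  have hσ2 : (0:ℝ) < σ ^ 2 := by positivity
  set t := ‖z - y‖ with hts
  have ht : 0 ≤ t := norm_nonneg _
  set G := Real.exp (-(2 * σ ^ 2)⁻¹ * ‖z - y‖ ^ 2) with hG
  have hGpos : 0 < G := Real.exp_pos _
  have hgauss : |gaussAux d σ c₀ (z - y)| = c₀ * G := by
    unfold gaussAux
    rw [abs_mul, abs_of_nonneg hc₀, abs_of_nonneg (Real.exp_nonneg _)]
  have h1 : ‖gB d σ c₀ f j z y‖ ≤
      |(z - y) j * (f z / σ ^ 2) * (gaussAux d σ c₀ (z - y) / σ ^ 2)| * t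
      + |f z / σ ^ 2 * gaussAux d σ c₀ (z - y)| * 1 := by
    unfold gB
    refine (norm_sub_le _ _).trans ?_
    rw [norm_smul ((z - y) j * (f z / σ ^ 2) * (gaussAux d σ c₀ (z - y) / σ ^ 2))
        (innerSL ℝ (z - y)),
      norm_smul (f z / σ ^ 2 * gaussAux d σ c₀ (z - y))
        (innerSL ℝ (EuclideanSpace.single j (1:ℝ))),
      innerSL_apply_norm (𝕜 := ℝ), innerSL_apply_norm (𝕜 := ℝ),
      Real.norm_eq_abs, Real.norm_eq_abs, EuclideanSpace.norm_single, norm_one]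
  refine h1.trans ?_
  have h2 : |(z - y) j * (f z / σ ^ 2) * (gaussAux d σ c₀ (z - y) / σ ^ 2)| * t
      ≤ t * (C * (σ ^ 2)⁻¹) * (c₀ * G * (σ ^ 2)⁻¹) * t := by
    rw [abs_mul, abs_mul, abs_div, abs_div, hgauss, abs_of_nonneg hσ2.le]
    have hcj := coord_abs_le d j (z - y)
    have hfz := hbd z
    have h3 : |f z| / σ ^ 2 ≤ C * (σ ^ 2)⁻¹ := by
      rw [div_eq_mul_inv]; gcongr
    have h4 : c₀ * G / σ ^ 2 = c₀ * G * (σ ^ 2)⁻¹ := by ring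
    rw [h4]
    gcongr
  have h5 : |f z / σ ^ 2 * gaussAux d σ c₀ (z - y)| * 1 ≤ C * (σ ^ 2)⁻¹ * (c₀ * G) := by
    rw [mul_one, abs_mul, abs_div, hgauss, abs_of_nonneg hσ2.le]
    have h3 : |f z| / σ ^ 2 ≤ C * (σ ^ 2)⁻¹ := by
      rw [div_eq_mul_inv]; gcongr; exact hbd z
    gcongr
  refine (add_le_add h2 h5).trans ?_
  have hsq : t ^ 2 ≤ (t + 1) ^ 2 := by nlinarith
  have hone : (1:ℝ) ≤ (t + 1) ^ 2 := by nlinarith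
  nlinarith [mul_nonneg (mul_nonneg hC hc₀) hGpos.le,
    mul_le_mul_of_nonneg_left hsq (mul_nonneg (mul_nonneg (mul_nonneg hC hc₀) hGpos.le)
      (mul_nonneg (inv_nonneg.2 hσ2.le) (inv_nonneg.2 hσ2.le))),
    mul_le_mul_of_nonneg_left hone (mul_nonneg (mul_nonneg (mul_nonneg hC hc₀) hGpos.le)
      (inv_nonneg.2 hσ2.le))]

lemma gB_aesm (d : ℕ) (σ : ℝ) (c₀ : ℝ) (f : EuclideanSpace ℝ (Fin d) → ℝ) (hf : Measurable f)
    (j : Fin d) (y : EuclideanSpace ℝ (Fin d)) :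
    AEStronglyMeasurable (fun z => gB d σ c₀ f j z y) volume := by
  unfold gB
  have hcont : Continuous fun z : EuclideanSpace ℝ (Fin d) => gaussAux d σ c₀ (z - y) :=
    (gaussAux_continuous d σ c₀).comp (continuous_id.sub continuous_const)
  have hcoord : Continuous fun z : EuclideanSpace ℝ (Fin d) => (z - y) j :=
    (EuclideanSpace.proj j).continuous.comp (continuous_id.sub continuous_const)
  have h1 : Measurable fun z : EuclideanSpace ℝ (Fin d) =>
      (z - y) j * (f z / σ ^ 2) * (gaussAux d σ c₀ (z - y) / σ ^ 2) :=
    (hcoord.measurable.mul (hf.div_const _)).mul (hcont.measurable.div_const _)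
  have h2 : Continuous fun z : EuclideanSpace ℝ (Fin d) => innerSL ℝ (z - y) :=
    (innerSL ℝ).continuous.comp (continuous_id.sub continuous_const)
  have h3 : Measurable fun z : EuclideanSpace ℝ (Fin d) =>
      f z / σ ^ 2 * gaussAux d σ c₀ (z - y) := (hf.div_const _).mul hcont.measurable
  exact (h1.aestronglyMeasurable.smul h2.aestronglyMeasurable).sub
    (h3.aestronglyMeasurable.smul aestronglyMeasurable_const)

lemma int_gB (d : ℕ) (σ : ℝ) (hσ : 0 < σ) (c₀ : ℝ) (hc₀ : 0 ≤ c₀)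
    (f : EuclideanSpace ℝ (Fin d) → ℝ) (hf : Measurable f) (C : ℝ) (hC : 0 ≤ C)
    (hbd : ∀ x, |f x| ≤ C) (j : Fin d) (y : EuclideanSpace ℝ (Fin d)) :
    Integrable (fun z => gB d σ c₀ f j z y) volume := by
  have hcb : (0:ℝ) < (2 * σ ^ 2)⁻¹ := by positivity
  refine (integrable_poly_gauss_shift d 2 ((2 * σ ^ 2)⁻¹)
    (C * c₀ * ((σ ^ 2)⁻¹ * (σ ^ 2)⁻¹ + (σ ^ 2)⁻¹)) hcb y).mono'
    (gB_aesm d σ c₀ f hf j y) ?_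
  filter_upwards with z
  exact norm_gB_le d σ hσ c₀ hc₀ f C hC hbd j z y

lemma hasFDerivAt_q (d : ℕ) (σ : ℝ) (hσ : 0 < σ) (c₀ : ℝ)
    (f : EuclideanSpace ℝ (Fin d) → ℝ) (j : Fin d) (z y : EuclideanSpace ℝ (Fin d)) :
    HasFDerivAt (fun y : EuclideanSpace ℝ (Fin d) =>
        f z / σ ^ 2 * gaussAux d σ c₀ (z - y) * ((z - y) j))
      (gB d σ c₀ f j z y) y := by
  have hp := (hasFDerivAt_gaussAux d σ hσ c₀ z y).const_mul (f z / σ ^ 2)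
  have hc := hasFDerivAt_coord d j z y
  have h := hp.mul hc
  refine h.congr_fderiv ?_
  unfold gB
  ext v
  simp only [ContinuousLinearMap.sub_apply, ContinuousLinearMap.add_apply,
    ContinuousLinearMap.smul_apply, ContinuousLinearMap.neg_apply, innerSL_apply_apply, smul_eq_mul]
  ring

lemma stage2 (d : ℕ) (σ : ℝ) (hσ : 0 < σ) (c₀ : ℝ) (hc₀ : 0 ≤ c₀)
    (f : EuclideanSpace ℝ (Fin d) → ℝ) (hf : Measurable f) (C : ℝ) (hC : 0 ≤ C)
    (hbd : ∀ x, |f x| ≤ C) (j : Fin d) (y₀ : EuclideanSpace ℝ (Fin d)) :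
    HasFDerivAt (fun y => ∫ z, f z / σ ^ 2 * gaussAux d σ c₀ (z - y) * ((z - y) j))
      (∫ z, gB d σ c₀ f j z y₀) y₀ := by
  have hσ2 : (0:ℝ) < σ ^ 2 := by positivity
  have hcb : (0:ℝ) < (2 * σ ^ 2)⁻¹ := by positivity
  have hcont : ∀ y : EuclideanSpace ℝ (Fin d),
      AEStronglyMeasurable (fun z : EuclideanSpace ℝ (Fin d) =>
        f z / σ ^ 2 * gaussAux d σ c₀ (z - y) * ((z - y) j)) volume := by
    intro y
    refine (((hf.div_const _).mul ((gaussAux_continuous d σ c₀).comp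
      (continuous_id.sub continuous_const)).measurable).mul
      ((EuclideanSpace.proj j).continuous.comp (continuous_id.sub continuous_const)).measurable
      ).aestronglyMeasurable
  refine hasFDerivAt_integral_of_dominated_of_fderiv_le
    (F := fun y z => f z / σ ^ 2 * gaussAux d σ c₀ (z - y) * ((z - y) j))
    (F' := fun y z => gB d σ c₀ f j z y)
    (bound := fun z => 4 * Real.exp ((2 * σ ^ 2)⁻¹) * (C * c₀ * ((σ ^ 2)⁻¹ * (σ ^ 2)⁻¹ + (σ ^ 2)⁻¹)) *
      ((‖z - y₀‖ + 1) ^ 2 * Real.exp (-((2 * σ ^ 2)⁻¹ / 2) * ‖z - y₀‖ ^ 2)))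
    (Metric.ball_mem_nhds y₀ one_pos) (Filter.Eventually.of_forall hcont) ?_ (gB_aesm d σ c₀ f hf j y₀) ?_ ?_ ?_
  · -- integrability of F y₀
    refine (integrable_poly_gauss_shift d 2 ((2 * σ ^ 2)⁻¹) (C * c₀ * (σ ^ 2)⁻¹) hcb y₀).mono'
      (hcont y₀) ?_
    filter_upwards with z
    set t := ‖z - y₀‖ with hts
    have ht : 0 ≤ t := norm_nonneg _
    rw [Real.norm_eq_abs, abs_mul, abs_mul, abs_div]
    have hgauss : |gaussAux d σ c₀ (z - y₀)| = c₀ * Real.exp (-(2 * σ ^ 2)⁻¹ * t ^ 2) := by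
      unfold gaussAux
      rw [abs_mul, abs_of_nonneg hc₀, abs_of_nonneg (Real.exp_nonneg _)]
    rw [hgauss, abs_of_nonneg hσ2.le]
    have hcj := coord_abs_le d j (z - y₀)
    have h3 : |f z| / σ ^ 2 ≤ C * (σ ^ 2)⁻¹ := by
      rw [div_eq_mul_inv]; gcongr; exact hbd z
    have key : |f z| / σ ^ 2 * (c₀ * Real.exp (-(2 * σ ^ 2)⁻¹ * t ^ 2)) * |(z - y₀) j|
        ≤ C * (σ ^ 2)⁻¹ * (c₀ * Real.exp (-(2 * σ ^ 2)⁻¹ * t ^ 2)) * t := by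
      gcongr <;> first
        | positivity
        | exact hcj
        | exact h3
    refine key.trans ?_
    have h1 : t ≤ (t + 1) ^ 2 := by nlinarith
    have hKn : (0:ℝ) ≤ C * (σ ^ 2)⁻¹ * c₀ * Real.exp (-(2 * σ ^ 2)⁻¹ * t ^ 2) := by positivity
    nlinarith [mul_le_mul_of_nonneg_left h1 hKn]
  · -- the uniform bound on the ball
    filter_upwards with z
    intro y hy
    have hdist : ‖y - y₀‖ < 1 := by
      rw [← dist_eq_norm]; exact Metric.mem_ball.mp hy
    have hst : ‖z - y₀‖ ≤ ‖z - y‖ + 1 := by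
      calc ‖z - y₀‖ = ‖(z - y) + (y - y₀)‖ := by abel_nf
        _ ≤ ‖z - y‖ + ‖y - y₀‖ := norm_add_le _ _
        _ ≤ ‖z - y‖ + 1 := by linarith
    have hts' : ‖z - y‖ ≤ ‖z - y₀‖ + 1 := by
      calc ‖z - y‖ = ‖(z - y₀) + (y₀ - y)‖ := by abel_nf
        _ ≤ ‖z - y₀‖ + ‖y₀ - y‖ := norm_add_le _ _
        _ ≤ ‖z - y₀‖ + 1 := by
            have : ‖y₀ - y‖ = ‖y - y₀‖ := norm_sub_rev _ _
            linarith
    refine (norm_gB_le d σ hσ c₀ hc₀ f C hC hbd j z y).trans ?_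
    set t := ‖z - y‖ with htdef
    set s := ‖z - y₀‖ with hsdef
    have ht : 0 ≤ t := norm_nonneg _
    have hs : 0 ≤ s := norm_nonneg _
    have he := exp_sq_bound ((2 * σ ^ 2)⁻¹) t s hcb ht hs hst
    have hKn : (0:ℝ) ≤ C * c₀ * ((σ ^ 2)⁻¹ * (σ ^ 2)⁻¹ + (σ ^ 2)⁻¹) := by positivity
    have hsq : (t + 1) ^ 2 ≤ 4 * (s + 1) ^ 2 := by nlinarith
    calc C * c₀ * ((σ ^ 2)⁻¹ * (σ ^ 2)⁻¹ + (σ ^ 2)⁻¹) *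
          ((t + 1) ^ 2 * Real.exp (-(2 * σ ^ 2)⁻¹ * t ^ 2))
        ≤ C * c₀ * ((σ ^ 2)⁻¹ * (σ ^ 2)⁻¹ + (σ ^ 2)⁻¹) *
          ((4 * (s + 1) ^ 2) * (Real.exp ((2 * σ ^ 2)⁻¹) *
            Real.exp (-((2 * σ ^ 2)⁻¹ / 2) * s ^ 2))) := by
          gcongr
      _ = 4 * Real.exp ((2 * σ ^ 2)⁻¹) * (C * c₀ * ((σ ^ 2)⁻¹ * (σ ^ 2)⁻¹ + (σ ^ 2)⁻¹)) *
          ((s + 1) ^ 2 * Real.exp (-((2 * σ ^ 2)⁻¹ / 2) * s ^ 2)) := by ring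
  · exact integrable_poly_gauss_shift d 2 ((2 * σ ^ 2)⁻¹ / 2)
      (4 * Real.exp ((2 * σ ^ 2)⁻¹) * (C * c₀ * ((σ ^ 2)⁻¹ * (σ ^ 2)⁻¹ + (σ ^ 2)⁻¹)))
      (by positivity) y₀
  · filter_upwards with z
    intro y hy
    exact hasFDerivAt_q d σ hσ c₀ f j z y
/-! ### Main theorem -/

theorem stein_second_order_mixed (d : ℕ) (hd : 0 < d) (σ : ℝ) (hσ : 0 < σ)
    (f : EuclideanSpace ℝ (Fin d) → ℝ) (hf : Measurable f)
    (C : ℝ) (hbd : ∀ x, |f x| ≤ C)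
    (u : EuclideanSpace ℝ (Fin d) → ℝ)
    (hu : ∀ x, u x = ∫ δ, f (x + δ) ∂(gaussianMeasure d σ)) :
    ∀ x, ∀ i j : Fin d, i ≠ j →
      fderiv ℝ (fun y => fderiv ℝ u y (EuclideanSpace.single j (1 : ℝ))) x
          (EuclideanSpace.single i (1 : ℝ)) =
        ∫ δ, (δ i * δ j / σ ^ 4) * f (x + δ) ∂(gaussianMeasure d σ) := by
  intro x i j hij
  have hC : 0 ≤ C := (abs_nonneg (f 0)).trans (hbd 0)
  have hσ' : σ ≠ 0 := ne_of_gt hσ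
  set c₀ : ℝ := (2 * π * σ ^ 2) ^ (-(d : ℝ) / 2) with hc₀def
  have hc₀ : 0 ≤ c₀ := by
    rw [hc₀def]
    positivity
  have hdens : ∀ φ : EuclideanSpace ℝ (Fin d) → ℝ,
      ∫ δ, φ δ ∂(gaussianMeasure d σ) = ∫ δ, gaussAux d σ c₀ δ * φ δ := by
    intro φ
    rw [gauss_int d σ φ]
    congr 1
    funext δ
    unfold gaussAux
    rw [hc₀def]
    rw [show -‖δ‖ ^ 2 / (2 * σ ^ 2) = -(2 * σ ^ 2)⁻¹ * ‖δ‖ ^ 2 from by ring]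
  have hu' : u = fun y => ∫ z, f z * gaussAux d σ c₀ (z - y) := by
    funext y
    rw [hu y, hdens]
    rw [← integral_sub_right_eq_self (fun δ => gaussAux d σ c₀ δ * f (y + δ)) y]
    congr 1
    funext z
    show gaussAux d σ c₀ (z - y) * f (y + (z - y)) = f z * gaussAux d σ c₀ (z - y)
    rw [show y + (z - y) = z from by abel]
    ring
  have hfd : (fun y => fderiv ℝ u y (EuclideanSpace.single j (1 : ℝ)))
      = fun y => ∫ z, f z / σ ^ 2 * gaussAux d σ c₀ (z - y) * ((z - y) j) := by
    funext y
    rw [hu']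
    rw [(stage1 d σ hσ c₀ hc₀ f hf C hC hbd y).fderiv]
    rw [ContinuousLinearMap.integral_apply (int_gA d σ hσ c₀ hc₀ f hf C hC hbd y)]
    congr 1
    funext z
    unfold gA
    simp only [ContinuousLinearMap.smul_apply, innerSL_apply_apply, smul_eq_mul]
    rw [show (inner ℝ (z - y) (EuclideanSpace.single j (1:ℝ)) : ℝ) = (z - y) j from by
      simp [EuclideanSpace.inner_single_right]]
    ring
  rw [hfd]
  rw [(stage2 d σ hσ c₀ hc₀ f hf C hC hbd j x).fderiv]
  rw [ContinuousLinearMap.integral_apply (int_gB d σ hσ c₀ hc₀ f hf C hC hbd j x)]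
  rw [hdens (fun δ => (δ i * δ j / σ ^ 4) * f (x + δ))]
  rw [← integral_sub_right_eq_self
    (fun δ => gaussAux d σ c₀ δ * ((δ i * δ j / σ ^ 4) * f (x + δ))) x]
  congr 1
  funext z
  show gB d σ c₀ f j z x (EuclideanSpace.single i (1:ℝ)) =
    gaussAux d σ c₀ (z - x) * (((z - x) i * (z - x) j / σ ^ 4) * f (x + (z - x)))
  unfold gB
  simp only [ContinuousLinearMap.sub_apply, ContinuousLinearMap.smul_apply, innerSL_apply_apply,
    smul_eq_mul]
  rw [show (inner ℝ (z - x) (EuclideanSpace.single i (1:ℝ)) : ℝ) = (z - x) i from by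
    simp [EuclideanSpace.inner_single_right]]
  rw [show (inner ℝ (EuclideanSpace.single j (1:ℝ)) (EuclideanSpace.single i (1:ℝ)) : ℝ) = 0 from by
    simp [EuclideanSpace.inner_single_right, EuclideanSpace.single_apply, hij]]
  rw [show x + (z - x) = z from by abel]
  field_simp
  ring
end

section
/- Let f : ℝ^d → ℝ be a bounded measurable function, σ > 0, and u(x) = E_{δ∼N(0,σ²I)}[f(x+δ)]. Then u is twice differentiable at every x ∈ ℝ^d and its Hessian matrix satisfies Hu(x) = E_{δ∼N(0,σ²I)}[((δδᵀ − σ²I)/σ⁴) · f(x+δ)], where the expectation of the matrix-valued integrand is taken entrywise. -/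
open MeasureTheory Real

namespace SteinAux

open Metric ContinuousLinearMap

noncomputable section

variable (d : ℕ) (σ : ℝ)

local notation "E" => EuclideanSpace ℝ (Fin d)

/-- Gaussian density. -/
def g (δ : E) : ℝ :=
  (2 * π * σ ^ 2) ^ (-(d : ℝ) / 2) * Real.exp (-‖δ‖ ^ 2 / (2 * σ ^ 2))

/-- First derivative of the Gaussian density. -/
def g1 (δ : E) : E →L[ℝ] ℝ := (-(σ ^ 2)⁻¹ * g d σ δ) • innerSL ℝ δ

/-- The inner product as a continuous linear map, real case. -/
def isl : E →L[ℝ] E →L[ℝ] ℝ := innerSL ℝ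

/-- Second derivative of the Gaussian density. -/
def g2 (δ : E) : E →L[ℝ] E →L[ℝ] ℝ :=
  (-(σ ^ 2)⁻¹ * g d σ δ) • isl d + ((-(σ ^ 2)⁻¹) • g1 d σ δ).smulRight (innerSL ℝ δ)

variable {σ}

lemma g_pos (hσ : 0 < σ) (δ : E) : 0 < g d σ δ := by
  have h2 : (0:ℝ) < 2 * π * σ ^ 2 := by positivity
  have := Real.rpow_pos_of_pos h2 (-(d : ℝ) / 2)
  exact mul_pos this (Real.exp_pos _)

lemma g_nonneg (hσ : 0 < σ) (δ : E) : 0 ≤ g d σ δ := (g_pos d hσ δ).le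

lemma g_cont : Continuous (g d σ) := by
  unfold g
  fun_prop

lemma g1_cont : Continuous (g1 d σ) := by
  unfold g1
  exact ((continuous_const.mul (g_cont d)).smul ((innerSL ℝ).continuous))

set_option synthInstance.maxHeartbeats 1000000 in
lemma g2_cont : Continuous (g2 d σ) := by
  unfold g2
  haveI : ContinuousAdd (E →L[ℝ] E →L[ℝ] ℝ) :=
    (@SeminormedAddCommGroup.toIsTopologicalAddGroup (E →L[ℝ] E →L[ℝ] ℝ) _).toContinuousAdd
  refine Continuous.add (M := E →L[ℝ] E →L[ℝ] ℝ) ?_ ?_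
  · exact (continuous_const.mul (g_cont d)).smul continuous_const
  · have h1 : Continuous fun δ : E => (-(σ ^ 2)⁻¹) • g1 d σ δ :=
      Continuous.const_smul (g1_cont (σ := σ) d) (-(σ ^ 2)⁻¹)
    have h2 : Continuous fun δ : E =>
        (ContinuousLinearMap.smulRightL ℝ E (E →L[ℝ] ℝ)) ((-(σ ^ 2)⁻¹) • g1 d σ δ) :=
      (ContinuousLinearMap.smulRightL ℝ E (E →L[ℝ] ℝ)).continuous.comp h1
    exact h2.clm_apply (innerSL ℝ).continuous

lemma hasFDerivAt_g (hσ : 0 < σ) (δ : E) : HasFDerivAt (g d σ) (g1 d σ δ) δ := by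
  have hq : HasFDerivAt (fun x : E => ‖x‖ ^ 2) (2 • innerSL ℝ δ) δ :=
    (hasStrictFDerivAt_norm_sq δ).hasFDerivAt
  have h1 : HasDerivAt (fun t : ℝ => -t / (2 * σ ^ 2)) (-(2 * σ ^ 2)⁻¹) (‖δ‖ ^ 2) := by
    have h := ((hasDerivAt_id (‖δ‖ ^ 2)).div_const (2 * σ ^ 2)).neg
    have h' := h.congr_of_eventuallyEq
      (Filter.Eventually.of_forall (fun t : ℝ => by simp only [_root_.id_eq]; ring : ∀ t : ℝ, -t / (2 * σ ^ 2) = -(_root_.id t / (2 * σ ^ 2))))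
    simpa using h'
  have hc := (h1.exp).const_mul ((2 * π * σ ^ 2) ^ (-(d : ℝ) / 2))
  have h := hc.comp_hasFDerivAt δ hq
  refine HasFDerivAt.congr_fderiv h ?_
  ext v
  have hσ2 : (σ:ℝ) ^ 2 ≠ 0 := by positivity
  unfold g1 g
  simp only [ContinuousLinearMap.smul_apply, smul_eq_mul, smul_apply, nsmul_eq_mul]
  push_cast
  field_simp

lemma hasFDerivAt_g1 (hσ : 0 < σ) (δ : E) : HasFDerivAt (g1 d σ) (g2 d σ δ) δ := by
  have hc : HasFDerivAt (fun x : E => -(σ ^ 2)⁻¹ * g d σ x)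
      ((-(σ ^ 2)⁻¹) • g1 d σ δ) δ := (hasFDerivAt_g d hσ δ).const_mul _
  have hf : HasFDerivAt (fun x : E => (innerSL ℝ x : E →L[ℝ] ℝ)) (isl d) δ :=
    (isl d).hasFDerivAt
  unfold g2
  exact hc.smul hf

lemma g1_apply (δ v : E) : g1 d σ δ v = -(σ ^ 2)⁻¹ * g d σ δ * (inner ℝ δ v : ℝ) := by
  simp [g1, mul_comm]

lemma g2_entry (hσ : 0 < σ) (δ : E) (i j : Fin d) :
    g2 d σ δ (EuclideanSpace.single i (1 : ℝ)) (EuclideanSpace.single j (1 : ℝ)) =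
      ((δ i * δ j - σ ^ 2 * (if i = j then (1 : ℝ) else 0)) / σ ^ 4) * g d σ δ := by
  have hσ2 : (σ:ℝ) ^ 2 ≠ 0 := by positivity
  have h1 : (inner ℝ δ (EuclideanSpace.single i (1 : ℝ)) : ℝ) = δ i := by
    simp [EuclideanSpace.inner_single_right]
  have h2 : (inner ℝ δ (EuclideanSpace.single j (1 : ℝ)) : ℝ) = δ j := by
    simp [EuclideanSpace.inner_single_right]
  have h3 : (inner ℝ (EuclideanSpace.single i (1 : ℝ)) (EuclideanSpace.single j (1 : ℝ)) : ℝ)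
      = if i = j then (1:ℝ) else 0 := by
    simp [EuclideanSpace.inner_single_right, EuclideanSpace.single_apply, eq_comm]
  have h2' : (innerSL ℝ) δ (EuclideanSpace.single j (1 : ℝ)) = δ j := h2
  have h3' : (innerSL ℝ) (EuclideanSpace.single i (1 : ℝ)) (EuclideanSpace.single j (1 : ℝ))
      = if i = j then (1:ℝ) else 0 := h3
  simp only [g2, ContinuousLinearMap.add_apply, ContinuousLinearMap.smul_apply,
    ContinuousLinearMap.smulRight_apply, isl, g1_apply, smul_eq_mul]
  rw [h1, h2', h3']
  by_cases h : i = j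
  · simp [h]; field_simp; ring
  · simp [h]; field_simp

lemma norm_g1_le (hσ : 0 < σ) (δ : E) : ‖g1 d σ δ‖ ≤ (σ ^ 2)⁻¹ * ‖δ‖ * g d σ δ := by
  unfold g1
  rw [norm_smul (-(σ ^ 2)⁻¹ * g d σ δ) (innerSL ℝ δ), innerSL_apply_norm ℝ]
  have : |(-(σ ^ 2)⁻¹ * g d σ δ)| = (σ ^ 2)⁻¹ * g d σ δ := by
    rw [abs_of_nonpos (by nlinarith [g_pos d hσ δ, sq_nonneg σ, inv_nonneg.mpr (sq_nonneg σ)])]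
    ring
  rw [Real.norm_eq_abs, this]
  ring_nf
  exact le_refl _

lemma norm_smul_clm2_le (a : ℝ) (A : E →L[ℝ] E →L[ℝ] ℝ) : ‖a • A‖ ≤ |a| * ‖A‖ := by
  refine ContinuousLinearMap.opNorm_le_bound _ (by positivity) (fun v => ?_)
  rw [ContinuousLinearMap.smul_apply, norm_smul a (A v), mul_assoc]
  exact mul_le_mul_of_nonneg_left (A.le_opNorm v) (abs_nonneg a)

lemma norm_g2_le (hσ : 0 < σ) (δ : E) :
    ‖g2 d σ δ‖ ≤ ((σ ^ 2)⁻¹ * (σ ^ 2)⁻¹ * ‖δ‖ ^ 2 + (σ ^ 2)⁻¹) * g d σ δ := by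
  have hg := g_pos d hσ δ
  have hinv : (0:ℝ) ≤ (σ ^ 2)⁻¹ := by positivity
  unfold g2
  refine (norm_add_le ((-(σ ^ 2)⁻¹ * g d σ δ) • isl d) (((-(σ ^ 2)⁻¹) • g1 d σ δ).smulRight (innerSL ℝ δ))).trans ?_
  have t2 : ‖(-(σ ^ 2)⁻¹ * g d σ δ) • isl d‖ ≤ (σ ^ 2)⁻¹ * g d σ δ := by
    refine ContinuousLinearMap.opNorm_le_bound _ (by positivity) (fun v => ?_)
    rw [ContinuousLinearMap.smul_apply, norm_smul (-(σ ^ 2)⁻¹ * g d σ δ) (isl d v)]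
    have hv : ‖isl d v‖ = ‖v‖ := innerSL_apply_norm ℝ v
    rw [hv, Real.norm_eq_abs, abs_of_nonpos (by nlinarith)]
    exact le_of_eq (by ring)
  have t1 : ‖(((-(σ ^ 2)⁻¹) • g1 d σ δ).smulRight (innerSL ℝ δ))‖ ≤
      (σ ^ 2)⁻¹ * (σ ^ 2)⁻¹ * ‖δ‖ ^ 2 * g d σ δ := by
    rw [ContinuousLinearMap.norm_smulRight_apply, norm_smul (-(σ ^ 2)⁻¹ : ℝ) (g1 d σ δ), innerSL_apply_norm ℝ]
    have h1 := norm_g1_le d hσ δ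
    have : ‖(-(σ ^ 2)⁻¹ : ℝ)‖ = (σ ^ 2)⁻¹ := by
      rw [Real.norm_eq_abs, abs_neg, abs_of_nonneg hinv]
    rw [this]
    calc (σ ^ 2)⁻¹ * ‖g1 d σ δ‖ * ‖δ‖ ≤ (σ ^ 2)⁻¹ * ((σ ^ 2)⁻¹ * ‖δ‖ * g d σ δ) * ‖δ‖ := by
          apply mul_le_mul_of_nonneg_right _ (norm_nonneg _)
          exact mul_le_mul_of_nonneg_left h1 hinv
      _ = (σ ^ 2)⁻¹ * (σ ^ 2)⁻¹ * ‖δ‖ ^ 2 * g d σ δ := by ring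
  calc _ ≤ (σ ^ 2)⁻¹ * g d σ δ + (σ ^ 2)⁻¹ * (σ ^ 2)⁻¹ * ‖δ‖ ^ 2 * g d σ δ := add_le_add t2 t1
    _ = ((σ ^ 2)⁻¹ * (σ ^ 2)⁻¹ * ‖δ‖ ^ 2 + (σ ^ 2)⁻¹) * g d σ δ := by ring

lemma sq_mul_exp_neg_le {a : ℝ} (ha : 0 < a) (t : ℝ) :
    t ^ 2 * Real.exp (-(a * t ^ 2)) ≤ 1 / a := by
  have he : 0 < Real.exp (a * t ^ 2) := Real.exp_pos _
  rw [Real.exp_neg, ← div_eq_mul_inv, div_le_div_iff₀ he ha]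
  nlinarith [Real.add_one_le_exp (a * t ^ 2)]

lemma master_bound (hσ : 0 < σ) (x₀ x y : E) (hx : ‖x - x₀‖ ≤ 1) :
    (1 + (σ ^ 2)⁻¹ * ‖y - x‖) ^ 2 * g d σ (y - x) ≤
      (2 * π * σ ^ 2) ^ (-(d : ℝ) / 2) * (2 + 8 * (σ ^ 2)⁻¹) * Real.exp ((4 * σ ^ 2)⁻¹)
        * Real.exp (-(8 * σ ^ 2)⁻¹ * ‖y - x₀‖ ^ 2) := by
  have hc0 : 0 < (2 * π * σ ^ 2) ^ (-(d : ℝ) / 2) := Real.rpow_pos_of_pos (by positivity) _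
  set c := (2 * π * σ ^ 2) ^ (-(d : ℝ) / 2) with hcdef
  set s := ‖y - x‖ with hsdef
  set r := ‖y - x₀‖ with hrdef
  have hs0 : 0 ≤ s := norm_nonneg _
  have hr0 : 0 ≤ r := norm_nonneg _
  have hsr : r - 1 ≤ s := by
    have h := norm_add_le (y - x) (x - x₀)
    rw [sub_add_sub_cancel] at h
    have : r ≤ s + ‖x - x₀‖ := h
    linarith
  have hs2 : r ^ 2 / 2 - 1 ≤ s ^ 2 := by
    rcases le_or_gt r 1 with h | h
    · nlinarith
    · have h1 : (0:ℝ) ≤ s - (r - 1) := by linarith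
      have h2 : (0:ℝ) ≤ s + (r - 1) := by linarith
      nlinarith [mul_nonneg h1 h2, sq_nonneg (r - 2)]
  have hg : g d σ (y - x) = c * Real.exp (-s ^ 2 / (2 * σ ^ 2)) := rfl
  have hsplit : -s ^ 2 / (2 * σ ^ 2) = -((4 * σ ^ 2)⁻¹ * s ^ 2) + -((4 * σ ^ 2)⁻¹ * s ^ 2) := by
    have hσ2 : (σ:ℝ) ^ 2 ≠ 0 := by positivity
    field_simp
    ring
  rw [hg, hsplit, Real.exp_add]
  set u := (σ ^ 2)⁻¹ * s with hudef
  set e1 := Real.exp (-((4 * σ ^ 2)⁻¹ * s ^ 2)) with he1def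
  have he1pos : 0 < e1 := Real.exp_pos _
  have he1le1 : e1 ≤ 1 := by
    rw [he1def, ← Real.exp_zero]
    exact Real.exp_le_exp.mpr (neg_nonpos.mpr (by positivity))
  have hs2e1 : s ^ 2 * e1 ≤ 4 * σ ^ 2 := by
    have h := sq_mul_exp_neg_le (a := (4 * σ ^ 2)⁻¹) (by positivity) s
    rwa [one_div, inv_inv] at h
  have hb1 : (1 + u) ^ 2 ≤ 2 + 2 * u ^ 2 := by nlinarith [sq_nonneg (1 - u)]
  have f1 : (1 + u) ^ 2 * e1 ≤ 2 + 8 * (σ ^ 2)⁻¹ := by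
    have hσ2 : (σ:ℝ) ^ 2 ≠ 0 := by positivity
    calc (1 + u) ^ 2 * e1 ≤ (2 + 2 * u ^ 2) * e1 :=
          mul_le_mul_of_nonneg_right hb1 he1pos.le
      _ = 2 * e1 + 2 * (σ ^ 2)⁻¹ * (σ ^ 2)⁻¹ * (s ^ 2 * e1) := by rw [hudef]; ring
      _ ≤ 2 * 1 + 2 * (σ ^ 2)⁻¹ * (σ ^ 2)⁻¹ * (4 * σ ^ 2) := by
          have h1 := mul_le_mul_of_nonneg_left he1le1 (by norm_num : (0:ℝ) ≤ 2)
          have h2 := mul_le_mul_of_nonneg_left hs2e1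
            (by positivity : (0:ℝ) ≤ 2 * (σ ^ 2)⁻¹ * (σ ^ 2)⁻¹)
          linarith
      _ = 2 + 8 * (σ ^ 2)⁻¹ := by field_simp; ring
  have f2 : e1 ≤ Real.exp ((4 * σ ^ 2)⁻¹) * Real.exp (-(8 * σ ^ 2)⁻¹ * r ^ 2) := by
    rw [← Real.exp_add, he1def]
    apply Real.exp_le_exp.mpr
    have ha4 : (0:ℝ) ≤ (4 * σ ^ 2)⁻¹ := by positivity
    have hmm := mul_le_mul_of_nonneg_left hs2 ha4
    have h48 : (4 * σ ^ 2)⁻¹ * (r ^ 2 / 2) = (8 * σ ^ 2)⁻¹ * r ^ 2 := by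
      rw [show (8:ℝ) * σ ^ 2 = (4 * σ ^ 2) * 2 by ring, mul_inv]
      ring
    nlinarith
  calc (1 + u) ^ 2 * (c * (e1 * e1)) = c * (((1 + u) ^ 2 * e1) * e1) := by ring
    _ ≤ c * ((2 + 8 * (σ ^ 2)⁻¹) * (Real.exp ((4 * σ ^ 2)⁻¹) * Real.exp (-(8 * σ ^ 2)⁻¹ * r ^ 2))) := by
        apply mul_le_mul_of_nonneg_left _ hc0.le
        exact mul_le_mul f1 f2 he1pos.le (by positivity)
    _ = c * (2 + 8 * (σ ^ 2)⁻¹) * Real.exp ((4 * σ ^ 2)⁻¹)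
        * Real.exp (-(8 * σ ^ 2)⁻¹ * r ^ 2) := by ring

lemma integrable_gauss (b : ℝ) (hb : 0 < b) :
    Integrable (fun y : E => Real.exp (-b * ‖y‖ ^ 2)) := by
  have h := (GaussianFourier.integrable_cexp_neg_mul_sq_norm_add (V := E) (b := (b : ℂ))
    (by simpa using hb) 0 0).norm
  refine h.congr (Filter.Eventually.of_forall fun v => ?_)
  simp only [Complex.norm_exp]
  congr 1
  simp [← Complex.ofReal_pow]

lemma integrable_gauss_shift (b : ℝ) (hb : 0 < b) (x₀ : E) :
    Integrable (fun y : E => Real.exp (-b * ‖y - x₀‖ ^ 2)) :=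
  Integrable.comp_sub_right (integrable_gauss d b hb) x₀

lemma integral_gaussianMeasure (hσ : 0 < σ) (h : E → ℝ) :
    ∫ δ, h δ ∂(gaussianMeasure d σ) = ∫ δ, g d σ δ * h δ := by
  have hmeas : Measurable fun δ : E => (g d σ δ).toNNReal :=
    (g_cont d).measurable.real_toNNReal
  rw [gaussianMeasure,
    show (fun δ : E => ENNReal.ofReal
        ((2 * π * σ ^ 2) ^ (-(d : ℝ) / 2) * Real.exp (-‖δ‖ ^ 2 / (2 * σ ^ 2)))) =
      fun δ : E => ((g d σ δ).toNNReal : ENNReal) from rfl,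
    integral_withDensity_eq_integral_smul hmeas]
  congr 1
  funext δ
  simp [NNReal.smul_def, Real.coe_toNNReal _ (g_nonneg d hσ δ)]

/-- Uniform integrable majorant. -/
def bnd (σ C : ℝ) (x₁ : E) : E → ℝ := fun y =>
  C * max 1 (σ ^ 2)⁻¹ *
    ((2 * π * σ ^ 2) ^ (-(d : ℝ) / 2) * (2 + 8 * (σ ^ 2)⁻¹) * Real.exp ((4 * σ ^ 2)⁻¹)
      * Real.exp (-(8 * σ ^ 2)⁻¹ * ‖y - x₁‖ ^ 2))

lemma bnd_nonneg (hσ : 0 < σ) {C : ℝ} (hC0 : 0 ≤ C) (x₁ y : E) : 0 ≤ bnd d σ C x₁ y := by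
  unfold bnd
  have h1 : (0:ℝ) < (2 * π * σ ^ 2) ^ (-(d : ℝ) / 2) := Real.rpow_pos_of_pos (by positivity) _
  have h2 : (0:ℝ) ≤ max 1 (σ ^ 2)⁻¹ := le_trans zero_le_one (le_max_left _ _)
  positivity

lemma bnd_integrable (hσ : 0 < σ) (C : ℝ) (x₁ : E) : Integrable (bnd d σ C x₁) := by
  have h := (integrable_gauss_shift d ((8 * σ ^ 2)⁻¹) (by positivity) x₁).const_mul
    (C * max 1 (σ ^ 2)⁻¹ *
      ((2 * π * σ ^ 2) ^ (-(d : ℝ) / 2) * (2 + 8 * (σ ^ 2)⁻¹) * Real.exp ((4 * σ ^ 2)⁻¹)))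
  refine h.congr (Filter.Eventually.of_forall fun y => ?_)
  unfold bnd
  ring_nf

lemma est0 (hσ : 0 < σ) {C : ℝ} (hC0 : 0 ≤ C) {f : E → ℝ} (hbd : ∀ x, |f x| ≤ C)
    {x₁ x : E} (hx : ‖x - x₁‖ ≤ 1) (y : E) :
    ‖f y * g d σ (y - x)‖ ≤ bnd d σ C x₁ y := by
  have hm := master_bound d hσ x₁ x y hx
  have hg0 := g_nonneg d hσ (y - x)
  have hn : (0:ℝ) ≤ ‖y - x‖ := norm_nonneg _
  have ha : (0:ℝ) ≤ (σ ^ 2)⁻¹ := by positivity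
  have hK1 : (1:ℝ) ≤ max 1 (σ ^ 2)⁻¹ := le_max_left _ _
  have hK0 : (0:ℝ) ≤ max 1 (σ ^ 2)⁻¹ := by linarith
  have hpoly : 1 ≤ max 1 (σ ^ 2)⁻¹ * (1 + (σ ^ 2)⁻¹ * ‖y - x‖) ^ 2 := by
    nlinarith [mul_nonneg ha hn, mul_nonneg (sub_nonneg.mpr hK1)
      (sq_nonneg (1 + (σ ^ 2)⁻¹ * ‖y - x‖)), sq_nonneg ((σ ^ 2)⁻¹ * ‖y - x‖)]
  calc ‖f y * g d σ (y - x)‖ = |f y| * g d σ (y - x) := by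
        rw [Real.norm_eq_abs, abs_mul, abs_of_nonneg hg0]
    _ ≤ C * g d σ (y - x) := mul_le_mul_of_nonneg_right (hbd y) hg0
    _ ≤ C * max 1 (σ ^ 2)⁻¹ * ((1 + (σ ^ 2)⁻¹ * ‖y - x‖) ^ 2 * g d σ (y - x)) := by
        nlinarith [mul_le_mul_of_nonneg_right hpoly hg0, mul_le_mul_of_nonneg_left
          (mul_le_mul_of_nonneg_right hpoly hg0) hC0]
    _ ≤ C * max 1 (σ ^ 2)⁻¹ *
        ((2 * π * σ ^ 2) ^ (-(d : ℝ) / 2) * (2 + 8 * (σ ^ 2)⁻¹) * Real.exp ((4 * σ ^ 2)⁻¹)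
          * Real.exp (-(8 * σ ^ 2)⁻¹ * ‖y - x₁‖ ^ 2)) :=
        mul_le_mul_of_nonneg_left hm (mul_nonneg hC0 hK0)
    _ = bnd d σ C x₁ y := rfl

lemma est1 (hσ : 0 < σ) {C : ℝ} (hC0 : 0 ≤ C) {f : E → ℝ} (hbd : ∀ x, |f x| ≤ C)
    {x₁ x : E} (hx : ‖x - x₁‖ ≤ 1) (y : E) :
    ‖(-(f y)) • g1 d σ (y - x)‖ ≤ bnd d σ C x₁ y := by
  have hm := master_bound d hσ x₁ x y hx
  have hg0 := g_nonneg d hσ (y - x)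
  have hn : (0:ℝ) ≤ ‖y - x‖ := norm_nonneg _
  have ha : (0:ℝ) ≤ (σ ^ 2)⁻¹ := by positivity
  have hK1 : (1:ℝ) ≤ max 1 (σ ^ 2)⁻¹ := le_max_left _ _
  have hK0 : (0:ℝ) ≤ max 1 (σ ^ 2)⁻¹ := by linarith
  have hpoly : (σ ^ 2)⁻¹ * ‖y - x‖ ≤ max 1 (σ ^ 2)⁻¹ * (1 + (σ ^ 2)⁻¹ * ‖y - x‖) ^ 2 := by
    nlinarith [mul_nonneg ha hn, mul_nonneg (sub_nonneg.mpr hK1)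
      (sq_nonneg (1 + (σ ^ 2)⁻¹ * ‖y - x‖)), sq_nonneg ((σ ^ 2)⁻¹ * ‖y - x‖)]
  calc ‖(-(f y)) • g1 d σ (y - x)‖ = |f y| * ‖g1 d σ (y - x)‖ := by
        rw [norm_smul (-(f y)) (g1 d σ (y - x)), Real.norm_eq_abs, abs_neg]
    _ ≤ C * ((σ ^ 2)⁻¹ * ‖y - x‖ * g d σ (y - x)) :=
        mul_le_mul (hbd y) (norm_g1_le d hσ _) (norm_nonneg _) hC0
    _ ≤ C * max 1 (σ ^ 2)⁻¹ * ((1 + (σ ^ 2)⁻¹ * ‖y - x‖) ^ 2 * g d σ (y - x)) := by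
        nlinarith [mul_le_mul_of_nonneg_left
          (mul_le_mul_of_nonneg_right hpoly hg0) hC0]
    _ ≤ C * max 1 (σ ^ 2)⁻¹ *
        ((2 * π * σ ^ 2) ^ (-(d : ℝ) / 2) * (2 + 8 * (σ ^ 2)⁻¹) * Real.exp ((4 * σ ^ 2)⁻¹)
          * Real.exp (-(8 * σ ^ 2)⁻¹ * ‖y - x₁‖ ^ 2)) :=
        mul_le_mul_of_nonneg_left hm (mul_nonneg hC0 hK0)
    _ = bnd d σ C x₁ y := rfl

lemma est2 (hσ : 0 < σ) {C : ℝ} (hC0 : 0 ≤ C) {f : E → ℝ} (hbd : ∀ x, |f x| ≤ C)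
    {x₁ x : E} (hx : ‖x - x₁‖ ≤ 1) (y : E) :
    ‖f y • g2 d σ (y - x)‖ ≤ bnd d σ C x₁ y := by
  have hm := master_bound d hσ x₁ x y hx
  have hg0 := g_nonneg d hσ (y - x)
  have hn : (0:ℝ) ≤ ‖y - x‖ := norm_nonneg _
  have ha : (0:ℝ) ≤ (σ ^ 2)⁻¹ := by positivity
  have hK1 : (1:ℝ) ≤ max 1 (σ ^ 2)⁻¹ := le_max_left _ _
  have hK0 : (0:ℝ) ≤ max 1 (σ ^ 2)⁻¹ := by linarith
  have hKs : (σ ^ 2)⁻¹ ≤ max 1 (σ ^ 2)⁻¹ := le_max_right _ _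
  have hpoly : (σ ^ 2)⁻¹ * (σ ^ 2)⁻¹ * ‖y - x‖ ^ 2 + (σ ^ 2)⁻¹ ≤
      max 1 (σ ^ 2)⁻¹ * (1 + (σ ^ 2)⁻¹ * ‖y - x‖) ^ 2 := by
    nlinarith [mul_nonneg ha hn, mul_nonneg (sub_nonneg.mpr hK1)
      (sq_nonneg ((σ ^ 2)⁻¹ * ‖y - x‖)), mul_nonneg hK0 (mul_nonneg ha hn),
      sq_nonneg ((σ ^ 2)⁻¹ * ‖y - x‖)]
  calc ‖f y • g2 d σ (y - x)‖ ≤ |f y| * ‖g2 d σ (y - x)‖ :=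
        norm_smul_clm2_le d (f y) (g2 d σ (y - x))
    _ ≤ C * (((σ ^ 2)⁻¹ * (σ ^ 2)⁻¹ * ‖y - x‖ ^ 2 + (σ ^ 2)⁻¹) * g d σ (y - x)) :=
        mul_le_mul (hbd y) (norm_g2_le d hσ _) (ContinuousLinearMap.opNorm_nonneg _) hC0
    _ ≤ C * max 1 (σ ^ 2)⁻¹ * ((1 + (σ ^ 2)⁻¹ * ‖y - x‖) ^ 2 * g d σ (y - x)) := by
        nlinarith [mul_le_mul_of_nonneg_left
          (mul_le_mul_of_nonneg_right hpoly hg0) hC0]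
    _ ≤ C * max 1 (σ ^ 2)⁻¹ *
        ((2 * π * σ ^ 2) ^ (-(d : ℝ) / 2) * (2 + 8 * (σ ^ 2)⁻¹) * Real.exp ((4 * σ ^ 2)⁻¹)
          * Real.exp (-(8 * σ ^ 2)⁻¹ * ‖y - x₁‖ ^ 2)) :=
        mul_le_mul_of_nonneg_left hm (mul_nonneg hC0 hK0)
    _ = bnd d σ C x₁ y := rfl

lemma aesm0 {f : E → ℝ} (hf : Measurable f) (x : E) :
    AEStronglyMeasurable (fun y : E => f y * g d σ (y - x)) volume :=
  (hf.mul ((g_cont d).measurable.comp (measurable_id.sub_const x))).aestronglyMeasurable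

lemma aesm1 {f : E → ℝ} (hf : Measurable f) (x : E) :
    AEStronglyMeasurable (fun y : E => (-(f y)) • g1 d σ (y - x)) volume :=
  (hf.neg.aestronglyMeasurable).smul
    (((g1_cont d).comp (continuous_id.sub continuous_const)).aestronglyMeasurable)

set_option synthInstance.maxHeartbeats 1000000 in
lemma aesm2 {f : E → ℝ} (hf : Measurable f) (x : E) :
    AEStronglyMeasurable (fun y : E => f y • g2 d σ (y - x)) volume :=
  (hf.aestronglyMeasurable).smul
    (((g2_cont d).comp (continuous_id.sub continuous_const)).aestronglyMeasurable)

lemma hx_of_ball {x x₁ : E} (hx : x ∈ Metric.ball x₁ 1) : ‖x - x₁‖ ≤ 1 := by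
  rw [← dist_eq_norm]
  exact (Metric.mem_ball.mp hx).le

lemma int0 (hσ : 0 < σ) {f : E → ℝ} (hf : Measurable f) {C : ℝ} (hbd : ∀ x, |f x| ≤ C)
    (x₁ : E) : Integrable (fun y : E => f y * g d σ (y - x₁)) := by
  have hC0 : 0 ≤ C := (abs_nonneg _).trans (hbd 0)
  refine (bnd_integrable d hσ C x₁).mono (aesm0 d hf x₁)
    (Filter.Eventually.of_forall fun y => ?_)
  rw [Real.norm_eq_abs (bnd d σ C x₁ y), abs_of_nonneg (bnd_nonneg d hσ hC0 x₁ y)]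
  exact est0 d hσ hC0 hbd (by simp) y

lemma int1 (hσ : 0 < σ) {f : E → ℝ} (hf : Measurable f) {C : ℝ} (hbd : ∀ x, |f x| ≤ C)
    (x₁ : E) : Integrable (fun y : E => (-(f y)) • g1 d σ (y - x₁)) := by
  have hC0 : 0 ≤ C := (abs_nonneg _).trans (hbd 0)
  refine (bnd_integrable d hσ C x₁).mono (aesm1 d hf x₁)
    (Filter.Eventually.of_forall fun y => ?_)
  rw [Real.norm_eq_abs (bnd d σ C x₁ y), abs_of_nonneg (bnd_nonneg d hσ hC0 x₁ y)]
  exact est1 d hσ hC0 hbd (by simp) y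

instance clm2ENorm : ContinuousENorm (E →L[ℝ] E →L[ℝ] ℝ) := @SeminormedAddGroup.toContinuousENorm (E →L[ℝ] E →L[ℝ] ℝ) _

set_option synthInstance.maxHeartbeats 1000000 in
lemma int2 (hσ : 0 < σ) {f : E → ℝ} (hf : Measurable f) {C : ℝ} (hbd : ∀ x, |f x| ≤ C)
    (x₁ : E) : Integrable (fun y : E => f y • g2 d σ (y - x₁)) := by
  have hC0 : 0 ≤ C := (abs_nonneg _).trans (hbd 0)
  refine (bnd_integrable d hσ C x₁).mono (β := E →L[ℝ] E →L[ℝ] ℝ) (aesm2 d hf x₁)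
    (Filter.Eventually.of_forall fun y => ?_)
  rw [Real.norm_eq_abs (bnd d σ C x₁ y), abs_of_nonneg (bnd_nonneg d hσ hC0 x₁ y)]
  exact est2 d hσ hC0 hbd (by simp) y

lemma hasFDerivAt_sub_const (y x : E) :
    HasFDerivAt (fun x : E => y - x) (-(ContinuousLinearMap.id ℝ E)) x := by
  have h := (hasFDerivAt_const (𝕜 := ℝ) y x).sub (hasFDerivAt_id x)
  rw [zero_sub] at h
  exact h

lemma hasFDerivAt_inner1 (hσ : 0 < σ) (a : ℝ) (y x : E) :
    HasFDerivAt (fun x : E => a * g d σ (y - x)) ((-a) • g1 d σ (y - x)) x := by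
  have h1 := (hasFDerivAt_g d hσ (y - x)).comp x (hasFDerivAt_sub_const d y x)
  have h2 := h1.const_mul a
  refine h2.congr_fderiv ?_
  ext v
  simp only [ContinuousLinearMap.smul_apply, ContinuousLinearMap.coe_comp',
    Function.comp_apply, ContinuousLinearMap.neg_apply, ContinuousLinearMap.coe_id',
    _root_.id, map_neg, smul_eq_mul, mul_neg, neg_mul]

lemma hasFDerivAt_inner2 (hσ : 0 < σ) (a : ℝ) (y x : E) :
    HasFDerivAt (fun x : E => (-a) • g1 d σ (y - x)) (a • g2 d σ (y - x)) x := by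
  have h1 := (hasFDerivAt_g1 d hσ (y - x)).comp x (hasFDerivAt_sub_const d y x)
  have h2 := h1.const_smul (-a)
  refine h2.congr_fderiv ?_
  ext v w
  simp only [ContinuousLinearMap.smul_apply, ContinuousLinearMap.coe_comp',
    Function.comp_apply, ContinuousLinearMap.neg_apply, ContinuousLinearMap.coe_id',
    _root_.id, map_neg, smul_eq_mul, mul_neg, neg_mul, neg_neg]

lemma hasFDerivAt_conv1 (hσ : 0 < σ) {f : E → ℝ} (hf : Measurable f) {C : ℝ}
    (hbd : ∀ x, |f x| ≤ C) (x₁ : E) :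
    HasFDerivAt (fun x : E => ∫ y : E, f y * g d σ (y - x))
      (∫ y : E, (-(f y)) • g1 d σ (y - x₁)) x₁ := by
  have hC0 : 0 ≤ C := (abs_nonneg _).trans (hbd 0)
  refine hasFDerivAt_integral_of_dominated_of_fderiv_le (bound := bnd d σ C x₁)
    (Metric.ball_mem_nhds x₁ one_pos) (Filter.Eventually.of_forall fun x => aesm0 d hf x) (int0 d hσ hf hbd x₁)
    (aesm1 d hf x₁) (Filter.Eventually.of_forall fun y x hx =>
      est1 d hσ hC0 hbd (hx_of_ball d hx) y) (bnd_integrable d hσ C x₁)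
    (Filter.Eventually.of_forall fun y x hx => hasFDerivAt_inner1 d hσ (f y) y x)

lemma hasFDerivAt_conv2 (hσ : 0 < σ) {f : E → ℝ} (hf : Measurable f) {C : ℝ}
    (hbd : ∀ x, |f x| ≤ C) (x₁ : E) :
    HasFDerivAt (fun x : E => ∫ y : E, (-(f y)) • g1 d σ (y - x))
      (∫ y : E, f y • g2 d σ (y - x₁)) x₁ := by
  have hC0 : 0 ≤ C := (abs_nonneg _).trans (hbd 0)
  refine hasFDerivAt_integral_of_dominated_of_fderiv_le (bound := bnd d σ C x₁)
    (Metric.ball_mem_nhds x₁ one_pos) (Filter.Eventually.of_forall fun x => aesm1 d hf x) (int1 d hσ hf hbd x₁)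
    (aesm2 d hf x₁) (Filter.Eventually.of_forall fun y x hx =>
      est2 d hσ hC0 hbd (hx_of_ball d hx) y) (bnd_integrable d hσ C x₁)
    (Filter.Eventually.of_forall fun y x hx => hasFDerivAt_inner2 d hσ (f y) y x)

lemma u_eq (hσ : 0 < σ) (f : E → ℝ) (x : E) :
    ∫ δ, f (x + δ) ∂(gaussianMeasure d σ) = ∫ y : E, f y * g d σ (y - x) := by
  rw [integral_gaussianMeasure d hσ]
  rw [← integral_add_left_eq_self (μ := (volume : Measure E)) (fun y : E => f y * g d σ (y - x)) x]
  congr 1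
  funext δ
  rw [add_sub_cancel_left]
  ring

end

end SteinAux

open SteinAux in
theorem stein_hessian (d : ℕ) (hd : 0 < d) (σ : ℝ) (hσ : 0 < σ)
    (f : EuclideanSpace ℝ (Fin d) → ℝ) (hf : Measurable f)
    (C : ℝ) (hbd : ∀ x, |f x| ≤ C)
    (u : EuclideanSpace ℝ (Fin d) → ℝ)
    (hu : ∀ x, u x = ∫ δ, f (x + δ) ∂(gaussianMeasure d σ)) :
    ∀ x, (DifferentiableAt ℝ u x ∧ DifferentiableAt ℝ (fderiv ℝ u) x) ∧
      ∀ i j : Fin d,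
        fderiv ℝ (fun y => fderiv ℝ u y (EuclideanSpace.single j (1 : ℝ))) x
            (EuclideanSpace.single i (1 : ℝ)) =
          ∫ δ, ((δ i * δ j - σ ^ 2 * (if i = j then (1 : ℝ) else 0)) / σ ^ 4) * f (x + δ)
            ∂(gaussianMeasure d σ) := by
  intro x₀
  have hveq : u = fun x => ∫ y : EuclideanSpace ℝ (Fin d), f y * SteinAux.g d σ (y - x) := by
    funext x
    rw [hu x, SteinAux.u_eq d hσ f x]
  have h1 : ∀ x, HasFDerivAt u (∫ y, (-(f y)) • SteinAux.g1 d σ (y - x)) x := by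
    intro x
    rw [hveq]
    exact SteinAux.hasFDerivAt_conv1 d hσ hf hbd x
  have hfd : ∀ x, fderiv ℝ u x = ∫ y, (-(f y)) • SteinAux.g1 d σ (y - x) :=
    fun x => (h1 x).fderiv
  have hfdf : (fderiv ℝ u) = fun x => ∫ y, (-(f y)) • SteinAux.g1 d σ (y - x) := funext hfd
  have h2 : HasFDerivAt (fderiv ℝ u) (∫ y, f y • SteinAux.g2 d σ (y - x₀)) x₀ := by
    rw [hfdf]
    exact SteinAux.hasFDerivAt_conv2 d hσ hf hbd x₀
  refine ⟨⟨(h1 x₀).differentiableAt, h2.differentiableAt⟩, ?_⟩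
  intro i j
  have h3 : HasFDerivAt (fun y => fderiv ℝ u y (EuclideanSpace.single j (1:ℝ)))
      ((ContinuousLinearMap.apply ℝ ℝ (EuclideanSpace.single j (1:ℝ))).comp
        (∫ y, f y • SteinAux.g2 d σ (y - x₀))) x₀ :=
    ((ContinuousLinearMap.apply ℝ ℝ (EuclideanSpace.single j (1:ℝ))).hasFDerivAt).comp x₀ h2
  rw [h3.fderiv]
  have hint := SteinAux.int2 d hσ hf hbd x₀
  have hint' := hint.apply_continuousLinearMap (EuclideanSpace.single i (1:ℝ))
  calc ((ContinuousLinearMap.apply ℝ ℝ (EuclideanSpace.single j (1:ℝ))).comp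
        (∫ y, f y • SteinAux.g2 d σ (y - x₀))) (EuclideanSpace.single i (1:ℝ))
      = ((∫ y, f y • SteinAux.g2 d σ (y - x₀)) (EuclideanSpace.single i (1:ℝ)))
          (EuclideanSpace.single j (1:ℝ)) := rfl
    _ = (∫ y, (f y • SteinAux.g2 d σ (y - x₀)) (EuclideanSpace.single i (1:ℝ)))
          (EuclideanSpace.single j (1:ℝ)) := by
        rw [ContinuousLinearMap.integral_apply hint]
    _ = ∫ y, (f y • SteinAux.g2 d σ (y - x₀)) (EuclideanSpace.single i (1:ℝ))
          (EuclideanSpace.single j (1:ℝ)) := by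
        rw [ContinuousLinearMap.integral_apply hint']
    _ = ∫ y, SteinAux.g d σ (y - x₀) * ((((y - x₀) i * (y - x₀) j
          - σ ^ 2 * (if i = j then (1:ℝ) else 0)) / σ ^ 4) * f y) := by
        congr 1
        funext y
        rw [ContinuousLinearMap.smul_apply, ContinuousLinearMap.smul_apply,
          smul_eq_mul, SteinAux.g2_entry d hσ]
        ring
    _ = ∫ δ, SteinAux.g d σ δ * (((δ i * δ j - σ ^ 2 * (if i = j then (1:ℝ) else 0)) / σ ^ 4)
          * f (x₀ + δ)) := by
        rw [← integral_add_left_eq_self (μ := (volume : Measure (EuclideanSpace ℝ (Fin d))))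
          (fun y => SteinAux.g d σ (y - x₀) * ((((y - x₀) i * (y - x₀) j
            - σ ^ 2 * (if i = j then (1:ℝ) else 0)) / σ ^ 4) * f y)) x₀]
        congr 1
        funext δ
        rw [add_sub_cancel_left]
    _ = ∫ δ, ((δ i * δ j - σ ^ 2 * (if i = j then (1 : ℝ) else 0)) / σ ^ 4) * f (x₀ + δ)
          ∂(gaussianMeasure d σ) := (SteinAux.integral_gaussianMeasure d hσ _).symm
end

section
/- Let f : ℝ^d → ℝ be a bounded measurable function, σ > 0, and u(x) = E_{δ∼N(0,σ²I)}[f(x+δ)]. Then the control-variate form of Stein's identity holds: ∇u(x) = E_{δ∼N(0,σ²I)}[(δ/σ²) · (f(x+δ) − f(x))] for every x ∈ ℝ^d. -/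
open MeasureTheory Real

open scoped ENNReal NNReal

set_option maxHeartbeats 1000000
set_option synthInstance.maxHeartbeats 1000000

lemma aux_integrable_exp {d : ℕ} (b : ℝ) (hb : 0 < b) :
    Integrable (fun v : EuclideanSpace ℝ (Fin d) => Real.exp (-b * ‖v‖ ^ 2)) := by
  have h := (GaussianFourier.integrable_cexp_neg_mul_sq_norm_add
      (V := EuclideanSpace ℝ (Fin d)) (b := (b : ℂ)) (by simpa using hb) 0 0).norm
  simpa [Complex.norm_exp, ← Complex.ofReal_pow] using h

lemma aux_integrable_norm_exp {d : ℕ} (b : ℝ) (hb : 0 < b) :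
    Integrable (fun v : EuclideanSpace ℝ (Fin d) => ‖v‖ * Real.exp (-b * ‖v‖ ^ 2)) := by
  have h := (aux_integrable_exp (d := d) (b / 2) (by positivity)).const_mul (max 1 (2 / b))
  refine h.mono' ?_ ?_
  · exact (continuous_norm.mul (Real.continuous_exp.comp
      (by continuity))).aestronglyMeasurable
  · filter_upwards with v
    have hn : (0:ℝ) ≤ ‖v‖ := norm_nonneg v
    have he : (0:ℝ) < Real.exp (-(b/2) * ‖v‖ ^ 2) := Real.exp_pos _
    rw [Real.norm_eq_abs, abs_of_nonneg (by positivity)]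
    have key : ‖v‖ * Real.exp (-(b/2) * ‖v‖ ^ 2) ≤ max 1 (2 / b) := by
      rcases le_total ‖v‖ 1 with h1 | h1
      · have : Real.exp (-(b/2) * ‖v‖ ^ 2) ≤ 1 := Real.exp_le_one_iff.2 (by nlinarith)
        calc ‖v‖ * Real.exp (-(b/2) * ‖v‖ ^ 2) ≤ 1 * 1 := by
              apply mul_le_mul h1 this he.le zero_le_one
          _ ≤ max 1 (2 / b) := by simp
      · have h2 : ‖v‖ ≤ ‖v‖ ^ 2 := by nlinarith
        have h3 : (b/2) * ‖v‖ ^ 2 ≤ Real.exp ((b/2) * ‖v‖ ^ 2) :=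
          (Real.add_one_le_exp _).trans' (by linarith)
        have h4 : ‖v‖ ≤ (2 / b) * Real.exp ((b/2) * ‖v‖ ^ 2) := by
          rw [div_mul_eq_mul_div, le_div_iff₀ hb]
          nlinarith
        calc ‖v‖ * Real.exp (-(b/2) * ‖v‖ ^ 2)
            ≤ ((2 / b) * Real.exp ((b/2) * ‖v‖ ^ 2)) * Real.exp (-(b/2) * ‖v‖ ^ 2) := by
              apply mul_le_mul_of_nonneg_right h4 he.le
          _ = 2 / b := by rw [mul_assoc, ← Real.exp_add]; ring_nf; simp
          _ ≤ max 1 (2 / b) := le_max_right _ _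
    calc ‖v‖ * Real.exp (-b * ‖v‖ ^ 2)
        = (‖v‖ * Real.exp (-(b/2) * ‖v‖ ^ 2)) * Real.exp (-(b/2) * ‖v‖ ^ 2) := by
          rw [mul_assoc, ← Real.exp_add]; ring_nf
      _ ≤ max 1 (2 / b) * Real.exp (-(b/2) * ‖v‖ ^ 2) := by
          apply mul_le_mul_of_nonneg_right key he.le

lemma integral_gaussianMeasure_eq {d : ℕ} (σ : ℝ) {E : Type*} [NormedAddCommGroup E]
    [NormedSpace ℝ E] (h : EuclideanSpace ℝ (Fin d) → E) :
    ∫ δ, h δ ∂(gaussianMeasure d σ) =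
      ∫ δ, ((2 * π * σ ^ 2) ^ (-(d : ℝ) / 2) * Real.exp (-‖δ‖ ^ 2 / (2 * σ ^ 2))) • h δ := by
  set g : EuclideanSpace ℝ (Fin d) → ℝ :=
    fun δ => (2 * π * σ ^ 2) ^ (-(d : ℝ) / 2) * Real.exp (-‖δ‖ ^ 2 / (2 * σ ^ 2)) with hg
  have hgc : Continuous g := continuous_const.mul (Real.continuous_exp.comp (((continuous_norm.pow 2).neg).div_const _))
  have hgnn : ∀ δ, 0 ≤ g δ := fun δ =>
    mul_nonneg (Real.rpow_nonneg (by positivity) _) (Real.exp_pos _).le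
  have h1 : gaussianMeasure d σ = volume.withDensity fun δ => ((g δ).toNNReal : ℝ≥0∞) := by
    rw [gaussianMeasure]; congr 1
  rw [h1, integral_withDensity_eq_integral_smul (hgc.measurable.real_toNNReal)]
  congr 1
  ext δ
  rw [NNReal.smul_def, Real.coe_toNNReal _ (hgnn δ)]

lemma aux_deriv {d : ℕ} (σ : ℝ) (c a : ℝ) (y x : EuclideanSpace ℝ (Fin d)) :
    HasFDerivAt (fun x => a * (c * Real.exp (-‖y - x‖ ^ 2 / (2 * σ ^ 2))))
      ((a * (c * Real.exp (-‖y - x‖ ^ 2 / (2 * σ ^ 2))) / σ ^ 2) • innerSL ℝ (y - x)) x := by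
  have h1 : HasFDerivAt (fun x : EuclideanSpace ℝ (Fin d) => y - x)
      (-(ContinuousLinearMap.id ℝ (EuclideanSpace ℝ (Fin d)))) x := by
    simpa using (hasFDerivAt_id x).const_sub y
  have h2 := h1.norm_sq
  have h3 := h2.mul_const (-(2 * σ ^ 2)⁻¹)
  have h4 := h3.exp
  have h5 := h4.const_mul (a * c)
  have hfun : (fun x => a * (c * Real.exp (-‖y - x‖ ^ 2 / (2 * σ ^ 2))))
      = fun x => (a * c) * Real.exp (‖y - x‖ ^ 2 * (-(2 * σ ^ 2)⁻¹)) := by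
    ext x'
    rw [show -‖y - x'‖ ^ 2 / (2 * σ ^ 2) = ‖y - x'‖ ^ 2 * (-(2 * σ ^ 2)⁻¹) by ring]
    ring
  rw [hfun]
  refine h5.congr_fderiv (Eq.symm ?_)
  ext w
  simp only [ContinuousLinearMap.smul_apply, innerSL_apply_apply, ContinuousLinearMap.comp_apply,
    ContinuousLinearMap.neg_apply, ContinuousLinearMap.id_apply, inner_neg_right, smul_eq_mul,
    ContinuousLinearMap.coe_smul', Pi.smul_apply]
  rw [show -‖y - x‖ ^ 2 / (2 * σ ^ 2) = ‖y - x‖ ^ 2 * (-(2 * σ ^ 2)⁻¹) by ring]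
  by_cases hσ : σ = 0
  · simp [hσ]
  · field_simp
    ring

theorem stein_first_order_control_variate (d : ℕ) (hd : 0 < d) (σ : ℝ) (hσ : 0 < σ)
    (f : EuclideanSpace ℝ (Fin d) → ℝ) (hf : Measurable f)
    (C : ℝ) (hbd : ∀ x, |f x| ≤ C)
    (u : EuclideanSpace ℝ (Fin d) → ℝ)
    (hu : ∀ x, u x = ∫ δ, f (x + δ) ∂(gaussianMeasure d σ)) :
    ∀ x, gradient u x =
      ∫ δ, ((f (x + δ) - f x) / σ ^ 2) • δ ∂(gaussianMeasure d σ) := by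
  intro x₀
  have hσ2 : (0:ℝ) < σ ^ 2 := by positivity
  have hC : (0:ℝ) ≤ C := (abs_nonneg _).trans (hbd 0)
  set b : ℝ := (2 * σ ^ 2)⁻¹ with hbdef
  have hb : 0 < b := by positivity
  set c : ℝ := (2 * π * σ ^ 2) ^ (-(d : ℝ) / 2) with hc
  have hcpos : 0 < c := Real.rpow_pos_of_pos (by positivity) _
  set g : EuclideanSpace ℝ (Fin d) → ℝ :=
    fun δ => c * Real.exp (-‖δ‖ ^ 2 / (2 * σ ^ 2)) with hg
  have hgeq : ∀ δ : EuclideanSpace ℝ (Fin d), g δ = c * Real.exp (-b * ‖δ‖ ^ 2) := by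
    intro δ
    show c * Real.exp (-‖δ‖ ^ 2 / (2 * σ ^ 2)) = c * Real.exp (-b * ‖δ‖ ^ 2)
    rw [hbdef, show -‖δ‖ ^ 2 / (2 * σ ^ 2) = -(2 * σ ^ 2)⁻¹ * ‖δ‖ ^ 2 by ring]
  have hgpos : ∀ δ, 0 < g δ := fun δ => mul_pos hcpos (Real.exp_pos _)
  have hgcont : Continuous g := continuous_const.mul (Real.continuous_exp.comp (((continuous_norm.pow 2).neg).div_const _))
  -- integrability of the density and the density times norm
  have hIg : Integrable g := by
    exact ((aux_integrable_exp (d := d) b hb).const_mul c).congr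
      (Filter.Eventually.of_forall fun δ => (hgeq δ).symm)
  have hIng : Integrable (fun δ : EuclideanSpace ℝ (Fin d) => ‖δ‖ * g δ) := by
    refine ((aux_integrable_norm_exp (d := d) b hb).const_mul c).congr ?_
    filter_upwards with δ
    rw [hgeq]
    ring
  -- u as a convolution-type integral
  have hu2 : ∀ x, u x = ∫ y, f y * g (y - x) := by
    intro x
    rw [hu x, integral_gaussianMeasure_eq]
    calc ∫ δ, ((2 * π * σ ^ 2) ^ (-(d : ℝ) / 2) * Real.exp (-‖δ‖ ^ 2 / (2 * σ ^ 2))) • f (x + δ)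
        = ∫ δ, (fun y => f y * g (y - x)) (x + δ) := by
          congr 1
          ext δ
          simp only [add_sub_cancel_left, smul_eq_mul, hg]
          ring
      _ = ∫ y, f y * g (y - x) := integral_add_left_eq_self (fun y => f y * g (y - x)) x
  -- measurability helpers
  have hgsub_cont : Continuous fun y : EuclideanSpace ℝ (Fin d) => g (y - x₀) :=
    hgcont.comp (continuous_id.sub continuous_const)
  have hmeas1 : ∀ x : EuclideanSpace ℝ (Fin d),
      AEStronglyMeasurable (fun y => f y * g (y - x)) volume := fun x =>
    (hf.mul (hgcont.comp (continuous_id.sub continuous_const)).measurable).aestronglyMeasurable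
  have hF_int : Integrable (fun y => f y * g (y - x₀)) := by
    refine ((hIg.comp_sub_right x₀).const_mul C).mono' (hmeas1 x₀) ?_
    filter_upwards with y
    rw [Real.norm_eq_abs, abs_mul, abs_of_pos (hgpos _)]
    exact mul_le_mul_of_nonneg_right (hbd y) (hgpos _).le
  -- the dominating function
  have hbase : Integrable
      (fun v : EuclideanSpace ℝ (Fin d) => (‖v‖ + 1) * Real.exp (-(b/2) * ‖v‖ ^ 2)) := by
    have h1 := aux_integrable_norm_exp (d := d) (b/2) (by positivity)
    have h2 := aux_integrable_exp (d := d) (b/2) (by positivity)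
    refine (h1.add h2).congr ?_
    filter_upwards with v
    simp only [Pi.add_apply]
    ring
  have hbound_int : Integrable (fun y : EuclideanSpace ℝ (Fin d) =>
      (C * c * Real.exp b / σ ^ 2) * ((‖y - x₀‖ + 1) * Real.exp (-(b/2) * ‖y - x₀‖ ^ 2))) :=
    (hbase.comp_sub_right x₀).const_mul _
  -- the uniform bound on the derivative
  have hkey : ∀ y : EuclideanSpace ℝ (Fin d), ∀ x ∈ Metric.ball x₀ 1,
      ‖(f y * g (y - x) / σ ^ 2) • innerSL ℝ (y - x)‖ ≤
        (C * c * Real.exp b / σ ^ 2) * ((‖y - x₀‖ + 1) * Real.exp (-(b/2) * ‖y - x₀‖ ^ 2)) := by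
    intro y x hx
    have hxx : ‖x - x₀‖ < 1 := by simpa [Metric.mem_ball, dist_eq_norm] using hx
    have htri1 := dist_triangle y x₀ x
    have htri2 := dist_triangle y x x₀
    rw [dist_eq_norm, dist_eq_norm, dist_eq_norm] at htri1 htri2
    have hrev : ‖x₀ - x‖ = ‖x - x₀‖ := norm_sub_rev _ _
    have hyx : ‖y - x‖ ≤ ‖y - x₀‖ + 1 := by rw [hrev] at htri1; linarith
    have hexp : Real.exp (-b * ‖y - x‖ ^ 2) ≤
        Real.exp b * Real.exp (-(b/2) * ‖y - x₀‖ ^ 2) := by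
      rw [← Real.exp_add]
      apply Real.exp_le_exp.2
      have ha : ‖y - x₀‖ ≤ ‖y - x‖ + 1 := by linarith
      have hq : ‖y - x₀‖ ^ 2 / 2 - 1 ≤ ‖y - x‖ ^ 2 := by
        nlinarith [norm_nonneg (y - x), norm_nonneg (y - x₀), sq_nonneg (‖y - x‖ - 1)]
      nlinarith [mul_le_mul_of_nonneg_left hq hb.le]
    rw [norm_smul (f y * g (y - x) / σ ^ 2) (innerSL ℝ (y - x)), Real.norm_eq_abs,
      innerSL_apply_norm]
    have habs : |f y * g (y - x) / σ ^ 2| = |f y| * g (y - x) / σ ^ 2 := by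
      rw [abs_div, abs_mul, abs_of_pos (hgpos _), abs_of_pos hσ2]
    rw [habs, hgeq]
    have hstep : |f y| * (c * Real.exp (-b * ‖y - x‖ ^ 2)) / σ ^ 2 * ‖y - x‖ ≤
        C * (c * (Real.exp b * Real.exp (-(b/2) * ‖y - x₀‖ ^ 2))) / σ ^ 2 * (‖y - x₀‖ + 1) := by
      gcongr
      all_goals first | exact hbd y | exact hexp | exact hyx
    refine hstep.trans (le_of_eq ?_)
    ring
  -- differentiability in the parameter
  have hdiff : ∀ y : EuclideanSpace ℝ (Fin d), ∀ x ∈ Metric.ball x₀ 1,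
      HasFDerivAt (fun x => f y * g (y - x))
        ((f y * g (y - x) / σ ^ 2) • innerSL ℝ (y - x)) x := by
    intro y x _
    exact aux_deriv σ c (f y) y x
  have hF'_meas : AEStronglyMeasurable
      (fun y => (f y * g (y - x₀) / σ ^ 2) • innerSL ℝ (y - x₀)) volume := by
    apply AEStronglyMeasurable.fun_smul
    · exact ((hf.mul hgsub_cont.measurable).div_const _).aestronglyMeasurable
    · exact ((innerSL ℝ).continuous.comp (continuous_id.sub continuous_const)).aestronglyMeasurable
  -- differentiation under the integral sign
  have hmain := hasFDerivAt_integral_of_dominated_of_fderiv_le (μ := volume) (𝕜 := ℝ)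
    (F := fun x y => f y * g (y - x))
    (F' := fun x y => (f y * g (y - x) / σ ^ 2) • innerSL ℝ (y - x)) (x₀ := x₀)
    (bound := fun y => (C * c * Real.exp b / σ ^ 2) *
      ((‖y - x₀‖ + 1) * Real.exp (-(b/2) * ‖y - x₀‖ ^ 2)))
    (Metric.ball_mem_nhds x₀ zero_lt_one) (Filter.Eventually.of_forall hmeas1) hF_int hF'_meas
    (Filter.Eventually.of_forall hkey) hbound_int (Filter.Eventually.of_forall hdiff)
  -- the vector-valued integrand
  have hw_meas : AEStronglyMeasurable
      (fun y => (f y * g (y - x₀) / σ ^ 2) • (y - x₀)) volume :=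
    (((hf.mul hgsub_cont.measurable).div_const _).aestronglyMeasurable).smul
      ((continuous_id.sub continuous_const).aestronglyMeasurable)
  have hw_int : Integrable (fun y => (f y * g (y - x₀) / σ ^ 2) • (y - x₀)) := by
    refine (((hIng.comp_sub_right x₀)).const_mul (C / σ ^ 2)).mono' hw_meas ?_
    filter_upwards with y
    rw [norm_smul, Real.norm_eq_abs, abs_div, abs_mul, abs_of_pos (hgpos _), abs_of_pos hσ2]
    have h1 : |f y| * g (y - x₀) / σ ^ 2 * ‖y - x₀‖ ≤
        C * g (y - x₀) / σ ^ 2 * ‖y - x₀‖ := by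
      gcongr
      exact hbd y
    refine h1.trans (le_of_eq ?_)
    ring
  have hF'_int : Integrable (fun y => (f y * g (y - x₀) / σ ^ 2) • innerSL ℝ (y - x₀)) := by
    refine (((hIng.comp_sub_right x₀)).const_mul (C / σ ^ 2)).mono' hF'_meas ?_
    filter_upwards with y
    rw [norm_smul (f y * g (y - x₀) / σ ^ 2) (innerSL ℝ (y - x₀)), Real.norm_eq_abs,
      innerSL_apply_norm, abs_div, abs_mul, abs_of_pos (hgpos _), abs_of_pos hσ2]
    have h1 : |f y| * g (y - x₀) / σ ^ 2 * ‖y - x₀‖ ≤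
        C * g (y - x₀) / σ ^ 2 * ‖y - x₀‖ := by
      gcongr
      exact hbd y
    refine h1.trans (le_of_eq ?_)
    ring
  -- identify the operator integral with the gradient vector
  have hop : (∫ y, (f y * g (y - x₀) / σ ^ 2) • innerSL ℝ (y - x₀)) =
      (InnerProductSpace.toDual ℝ (EuclideanSpace ℝ (Fin d)))
        (∫ y, (f y * g (y - x₀) / σ ^ 2) • (y - x₀)) := by
    apply ContinuousLinearMap.ext
    intro w
    rw [ContinuousLinearMap.integral_apply hF'_int, InnerProductSpace.toDual_apply_apply,
      real_inner_comm, ← integral_inner hw_int]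
    congr 1
    funext y
    simp only [ContinuousLinearMap.smul_apply, innerSL_apply_apply, smul_eq_mul,
      real_inner_smul_right]
    rw [real_inner_comm]
  have hueq : u = fun x => ∫ y, f y * g (y - x) := funext hu2
  have hgrad : HasGradientAt u (∫ y, (f y * g (y - x₀) / σ ^ 2) • (y - x₀)) x₀ := by
    rw [hasGradientAt_iff_hasFDerivAt, hueq, ← hop]
    exact hmain
  rw [hgrad.gradient]
  -- change of variables and the control-variate term
  have hv1 : (∫ y, (f y * g (y - x₀) / σ ^ 2) • (y - x₀)) =
      ∫ δ, (f (x₀ + δ) * g δ / σ ^ 2) • δ := by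
    rw [← integral_add_left_eq_self (fun y => (f y * g (y - x₀) / σ ^ 2) • (y - x₀)) x₀]
    congr 1
    ext δ
    simp [add_sub_cancel_left]
  have hIgd : Integrable (fun δ : EuclideanSpace ℝ (Fin d) => g δ • δ) := by
    refine hIng.mono' (hgcont.aestronglyMeasurable.smul aestronglyMeasurable_id) ?_
    filter_upwards with δ
    rw [norm_smul, Real.norm_eq_abs, abs_of_pos (hgpos δ), mul_comm]
  have hzero : (∫ δ : EuclideanSpace ℝ (Fin d), g δ • δ) = 0 := by
    have h1 := integral_neg_eq_self (fun δ : EuclideanSpace ℝ (Fin d) => g δ • δ) volume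
    have h2 : (fun δ : EuclideanSpace ℝ (Fin d) => g (-δ) • (-δ))
        = fun δ => -(g δ • δ) := by
      funext δ
      show (c * Real.exp (-‖-δ‖ ^ 2 / (2 * σ ^ 2))) • (-δ) = -((c * Real.exp (-‖δ‖ ^ 2 / (2 * σ ^ 2))) • δ)
      rw [norm_neg, smul_neg]
    rw [h2, integral_neg] at h1
    have h3 : (2:ℝ) • (∫ δ : EuclideanSpace ℝ (Fin d), g δ • δ) = 0 := by
      rw [two_smul]
      nth_rewrite 1 [← h1]
      simp
    exact (smul_eq_zero.mp h3).resolve_left (by norm_num)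
  have hI1 : Integrable (fun δ => (f (x₀ + δ) * g δ / σ ^ 2) • δ) := by
    have := hw_int.comp_add_left x₀
    refine this.congr ?_
    filter_upwards with δ
    simp [add_sub_cancel_left]
  have hI2 : Integrable (fun δ : EuclideanSpace ℝ (Fin d) => ((f x₀ / σ ^ 2) * g δ) • δ) := by
    have := hIgd.smul (f x₀ / σ ^ 2)
    refine this.congr ?_
    filter_upwards with δ
    simp [smul_smul]
  have hrhs : (∫ δ, ((f (x₀ + δ) - f x₀) / σ ^ 2) • δ ∂(gaussianMeasure d σ))
      = ∫ δ, (f (x₀ + δ) * g δ / σ ^ 2) • δ := by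
    rw [integral_gaussianMeasure_eq]
    have hsplit : ∀ δ : EuclideanSpace ℝ (Fin d),
        ((2 * π * σ ^ 2) ^ (-(d : ℝ) / 2) * Real.exp (-‖δ‖ ^ 2 / (2 * σ ^ 2))) •
          (((f (x₀ + δ) - f x₀) / σ ^ 2) • δ)
        = (f (x₀ + δ) * g δ / σ ^ 2) • δ - ((f x₀ / σ ^ 2) * g δ) • δ := by
      intro δ
      rw [smul_smul, ← sub_smul]
      congr 1
      show (2 * π * σ ^ 2) ^ (-(d : ℝ) / 2) * Real.exp (-‖δ‖ ^ 2 / (2 * σ ^ 2)) *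
          ((f (x₀ + δ) - f x₀) / σ ^ 2)
        = f (x₀ + δ) * (c * Real.exp (-‖δ‖ ^ 2 / (2 * σ ^ 2))) / σ ^ 2 -
          f x₀ / σ ^ 2 * (c * Real.exp (-‖δ‖ ^ 2 / (2 * σ ^ 2)))
      rw [← hc]
      ring
    calc ∫ δ, ((2 * π * σ ^ 2) ^ (-(d : ℝ) / 2) * Real.exp (-‖δ‖ ^ 2 / (2 * σ ^ 2))) •
          (((f (x₀ + δ) - f x₀) / σ ^ 2) • δ)
        = ∫ δ, ((f (x₀ + δ) * g δ / σ ^ 2) • δ - ((f x₀ / σ ^ 2) * g δ) • δ) := by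
          exact congrArg _ (funext hsplit)
      _ = (∫ δ, (f (x₀ + δ) * g δ / σ ^ 2) • δ) - ∫ δ : EuclideanSpace ℝ (Fin d), ((f x₀ / σ ^ 2) * g δ) • δ :=
          integral_sub hI1 hI2
      _ = ∫ δ, (f (x₀ + δ) * g δ / σ ^ 2) • δ := by
          have : (fun δ : EuclideanSpace ℝ (Fin d) => ((f x₀ / σ ^ 2) * g δ) • δ)
              = fun δ => (f x₀ / σ ^ 2) • (g δ • δ) := by
            ext δ
            rw [smul_smul]
          rw [this, integral_smul, hzero, smul_zero, sub_zero]
  rw [hv1, hrhs]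
end

section
/- Let f : ℝ^d → ℝ be a bounded measurable function, σ > 0, and u(x) = E_{δ∼N(0,σ²I)}[f(x+δ)]. Then the antithetic-variable form of Stein's identity holds: ∇u(x) = E_{δ∼N(0,σ²I)}[(δ/(2σ²)) · (f(x+δ) − f(x−δ))] for every x ∈ ℝ^d. -/
open MeasureTheory Real

lemma integrable_exp_gauss (d : ℕ) {b : ℝ} (hb : 0 < b) :
    Integrable (fun v : EuclideanSpace ℝ (Fin d) => rexp (-b * ‖v‖ ^ 2)) := by
  have h := (GaussianFourier.integrable_cexp_neg_mul_sq_norm_add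
      (V := EuclideanSpace ℝ (Fin d)) (b := (b : ℂ)) (by simpa using hb) 0 0).norm
  refine h.congr (Filter.Eventually.of_forall fun v => ?_)
  simp [Complex.norm_exp]
  exact Or.inl (by rw [← Complex.ofReal_pow]; exact Complex.ofReal_re _)

lemma mul_exp_le_aux {b t : ℝ} (hb : 0 < b) (ht : 0 ≤ t) :
    t * rexp (-b * t ^ 2) ≤ Real.sqrt (2 / b) * rexp (-(b / 2) * t ^ 2) := by
  have h1 : b / 2 * t ^ 2 ≤ rexp (b / 2 * t ^ 2) :=
    le_trans (by linarith [sq_nonneg t]) (Real.add_one_le_exp _)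
  have h2 : t ^ 2 ≤ 2 / b * rexp (b / 2 * t ^ 2) := by
    rw [div_mul_eq_mul_div, le_div_iff₀ hb]
    nlinarith
  have h3 : t ≤ Real.sqrt (2 / b) * rexp (b / 4 * t ^ 2) := by
    have := Real.sqrt_le_sqrt h2
    rwa [Real.sqrt_sq ht, Real.sqrt_mul (by positivity), ← Real.exp_half,
      show b / 2 * t ^ 2 / 2 = b / 4 * t ^ 2 by ring] at this
  calc t * rexp (-b * t ^ 2)
      ≤ (Real.sqrt (2 / b) * rexp (b / 4 * t ^ 2)) * rexp (-b * t ^ 2) :=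
        mul_le_mul_of_nonneg_right h3 (Real.exp_nonneg _)
    _ = Real.sqrt (2 / b) * rexp (b / 4 * t ^ 2 + -b * t ^ 2) := by
        rw [Real.exp_add]; ring
    _ ≤ Real.sqrt (2 / b) * rexp (-(b / 2) * t ^ 2) :=
        mul_le_mul_of_nonneg_left (Real.exp_le_exp.2 (by nlinarith [sq_nonneg t]))
          (Real.sqrt_nonneg _)

lemma integrable_norm_mul_exp_gauss (d : ℕ) {b : ℝ} (hb : 0 < b) :
    Integrable (fun v : EuclideanSpace ℝ (Fin d) => ‖v‖ * rexp (-b * ‖v‖ ^ 2)) := by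
  have hi := ((integrable_exp_gauss d (half_pos hb)).const_mul (Real.sqrt (2 / b)))
  refine hi.mono ?_ (Filter.Eventually.of_forall fun v => ?_)
  · exact (continuous_norm.mul (by continuity)).aestronglyMeasurable
  · rw [Real.norm_eq_abs, Real.norm_eq_abs, abs_of_nonneg (by positivity),
      abs_of_nonneg (by positivity)]
    exact mul_exp_le_aux hb (norm_nonneg v)

lemma integral_gaussianMeasure {d : ℕ} {σ : ℝ} (hσ : 0 < σ) {B : Type*}
    [NormedAddCommGroup B] [NormedSpace ℝ B] (h : EuclideanSpace ℝ (Fin d) → B) :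
    ∫ δ, h δ ∂(gaussianMeasure d σ) =
      ∫ δ, ((2 * π * σ ^ 2) ^ (-(d : ℝ) / 2)
        * rexp (-(1 / (2 * σ ^ 2)) * ‖δ‖ ^ 2)) • h δ := by
  have hmeas : Measurable fun δ : EuclideanSpace ℝ (Fin d) =>
      (((2 * π * σ ^ 2) ^ (-(d : ℝ) / 2) * rexp (-‖δ‖ ^ 2 / (2 * σ ^ 2))).toNNReal) := by
    measurability
  have hfun : (fun δ : EuclideanSpace ℝ (Fin d) =>
      ENNReal.ofReal ((2 * π * σ ^ 2) ^ (-(d : ℝ) / 2) * Real.exp (-‖δ‖ ^ 2 / (2 * σ ^ 2))))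
      = fun δ =>
      ((((2 * π * σ ^ 2) ^ (-(d : ℝ) / 2)
        * rexp (-‖δ‖ ^ 2 / (2 * σ ^ 2))).toNNReal : NNReal) : ENNReal) := rfl
  rw [gaussianMeasure, hfun, integral_withDensity_eq_integral_smul hmeas h]
  congr 1; funext δ
  rw [NNReal.smul_def, Real.coe_toNNReal _ (by positivity)]
  rw [show -‖δ‖ ^ 2 / (2 * σ ^ 2) = -(1 / (2 * σ ^ 2)) * ‖δ‖ ^ 2 by ring]

lemma gauss_bound_helper {a c C fy m n : ℝ} (ha : 0 < a) (hc : 0 ≤ c)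
    (hC : |fy| ≤ C) (hm0 : 0 ≤ m) (hn0 : 0 ≤ n) (hmn : m ≤ n + 1) (hnm : n ≤ m + 1) :
    |fy * (2 * a * (c * rexp (-a * m ^ 2)))| * m ≤
      C * (2 * a) * (c * rexp a) * ((n + 1) * rexp (-(a / 2) * n ^ 2)) := by
  have hC0 : 0 ≤ C := (abs_nonneg _).trans hC
  have hexp : rexp (-a * m ^ 2) ≤ rexp a * rexp (-(a / 2) * n ^ 2) := by
    rw [← Real.exp_add]
    apply Real.exp_le_exp.2
    have hsq : n ^ 2 ≤ 2 * m ^ 2 + 2 := by nlinarith [sq_nonneg (m - 1), mul_le_mul hnm hnm hn0 (by linarith : (0:ℝ) ≤ m + 1)]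
    nlinarith [mul_le_mul_of_nonneg_left hsq (le_of_lt (half_pos ha))]
  have h1 : rexp (-a * m ^ 2) * m ≤ (rexp a * rexp (-(a / 2) * n ^ 2)) * (n + 1) :=
    mul_le_mul hexp hmn hm0 (by positivity)
  calc |fy * (2 * a * (c * rexp (-a * m ^ 2)))| * m
      = |fy| * ((2 * a) * c) * (rexp (-a * m ^ 2) * m) := by
        rw [abs_mul, abs_of_nonneg (show (0:ℝ) ≤ 2 * a * (c * rexp (-a * m ^ 2)) by positivity)]
        ring
    _ ≤ C * ((2 * a) * c) * ((rexp a * rexp (-(a / 2) * n ^ 2)) * (n + 1)) :=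
        mul_le_mul (mul_le_mul_of_nonneg_right hC (by positivity)) h1
          (by positivity) (by positivity)
    _ = C * (2 * a) * (c * rexp a) * ((n + 1) * rexp (-(a / 2) * n ^ 2)) := by ring

set_option maxHeartbeats 2000000 in
set_option synthInstance.maxHeartbeats 400000 in
theorem stein_first_order_antithetic (d : ℕ) (hd : 0 < d) (σ : ℝ) (hσ : 0 < σ)
    (f : EuclideanSpace ℝ (Fin d) → ℝ) (hf : Measurable f)
    (C : ℝ) (hbd : ∀ x, |f x| ≤ C)
    (u : EuclideanSpace ℝ (Fin d) → ℝ)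
    (hu : ∀ x, u x = ∫ δ, f (x + δ) ∂(gaussianMeasure d σ)) :
    ∀ x, gradient u x =
      ∫ δ, ((f (x + δ) - f (x - δ)) / (2 * σ ^ 2)) • δ ∂(gaussianMeasure d σ) := by
  intro x
  have hσ2 : (0:ℝ) < 2 * σ ^ 2 := by positivity
  set a : ℝ := 1 / (2 * σ ^ 2) with ha
  have ha_pos : 0 < a := by positivity
  set c : ℝ := (2 * π * σ ^ 2) ^ (-(d : ℝ) / 2) with hc
  have hc_pos : 0 < c := Real.rpow_pos_of_pos (by positivity) _
  set G : EuclideanSpace ℝ (Fin d) → ℝ := fun z => c * rexp (-a * ‖z‖ ^ 2) with hGdef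
  have hG_cont : Continuous G := by
    apply continuous_const.mul
    exact Real.continuous_exp.comp (by continuity)
  have hG_nonneg : ∀ z, 0 ≤ G z := fun z => by positivity
  have hC0 : 0 ≤ C := (abs_nonneg _).trans (hbd 0)
  -- integrability of basic gaussians
  have hint1 : Integrable (fun z : EuclideanSpace ℝ (Fin d) => G z) :=
    (integrable_exp_gauss d ha_pos).const_mul c
  have hint2 : Integrable (fun z : EuclideanSpace ℝ (Fin d) => ‖z‖ * G z) := by
    refine ((integrable_norm_mul_exp_gauss d ha_pos).const_mul c).congr
      (Filter.Eventually.of_forall fun z => ?_)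
    simp only [hGdef]; ring
  -- u as convolution-type integral
  have hu' : u = fun x' => ∫ y, f y * G (y - x') := by
    funext x'
    rw [hu x', integral_gaussianMeasure hσ]
    calc ∫ δ, (c * rexp (-(1 / (2 * σ ^ 2)) * ‖δ‖ ^ 2)) • f (x' + δ)
        = ∫ δ, G δ * f (x' + δ) := by
          apply integral_congr_ae (Filter.Eventually.of_forall fun δ => ?_)
          simp only [smul_eq_mul, hGdef, ha]
      _ = ∫ y, G (y - x') * f (x' + (y - x')) :=
          (integral_sub_right_eq_self (fun δ => G δ * f (x' + δ)) x').symm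
      _ = ∫ y, f y * G (y - x') := by
          apply integral_congr_ae (Filter.Eventually.of_forall fun y => ?_)
          rw [add_sub_cancel, mul_comm]
  -- derivative of the Gaussian kernel
  have hGderiv : ∀ (y x' : EuclideanSpace ℝ (Fin d)),
      HasFDerivAt (fun t => G (y - t)) ((2 * a * G (y - x')) • innerSL ℝ (y - x')) x' := by
    intro y x'
    have h1 : HasFDerivAt (fun t : EuclideanSpace ℝ (Fin d) => y - t)
        (-(ContinuousLinearMap.id ℝ (EuclideanSpace ℝ (Fin d)))) x' := by
      exact (hasFDerivAt_id (𝕜 := ℝ) x').const_sub y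
    have h2 := h1.norm_sq
    have h3 := h2.const_mul (-a)
    have h4 := (Real.hasDerivAt_exp (-a * ‖y - x'‖ ^ 2)).comp_hasFDerivAt x' h3
    have h5 := h4.const_mul c
    refine h5.congr_fderiv ?_
    ext z
    simp [two_smul, inner_neg_right, hGdef]
    ring
  have hderiv_main : ∀ (y x' : EuclideanSpace ℝ (Fin d)),
      HasFDerivAt (fun t => f y * G (y - t))
        ((f y * (2 * a * G (y - x'))) • innerSL ℝ (y - x')) x' := by
    intro y x'
    have := (hGderiv y x').const_mul (f y)
    rwa [smul_smul] at this
  set w : EuclideanSpace ℝ (Fin d) := ∫ y, (f y * (2 * a * G (y - x))) • (y - x) with hw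
  have hw_meas : AEStronglyMeasurable
      (fun y : EuclideanSpace ℝ (Fin d) => (f y * (2 * a * G (y - x))) • (y - x)) volume :=
    (hf.aestronglyMeasurable.mul ((continuous_const.mul
      (hG_cont.comp (continuous_id.sub continuous_const))).aestronglyMeasurable)).smul
      (continuous_id.sub continuous_const).aestronglyMeasurable
  have hw_int : Integrable
      (fun y : EuclideanSpace ℝ (Fin d) => (f y * (2 * a * G (y - x))) • (y - x)) := by
    refine ((hint2.comp_sub_right x).const_mul (2 * a * C)).mono' hw_meas
      (Filter.Eventually.of_forall fun y => ?_)
    have h0 : (0:ℝ) ≤ 2 * a * G (y - x) := by positivity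
    rw [norm_smul, Real.norm_eq_abs, abs_mul, abs_of_nonneg h0]
    calc |f y| * (2 * a * G (y - x)) * ‖y - x‖
        ≤ C * (2 * a * G (y - x)) * ‖y - x‖ :=
          mul_le_mul_of_nonneg_right (mul_le_mul_of_nonneg_right (hbd y) h0) (norm_nonneg _)
      _ = 2 * a * C * (‖y - x‖ * G (y - x)) := by ring
  have key : HasFDerivAt (fun x' => ∫ y, f y * G (y - x'))
      (∫ y, (f y * (2 * a * G (y - x))) • innerSL ℝ (y - x)) x := by
    apply hasFDerivAt_integral_of_dominated_of_fderiv_le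
      (F' := fun x' y => (f y * (2 * a * G (y - x'))) • innerSL ℝ (y - x'))
      (bound := fun y => C * (2 * a) * (c * rexp a)
        * ((‖y - x‖ + 1) * rexp (-(a / 2) * ‖y - x‖ ^ 2)))
      (s := Metric.ball x 1) (Metric.ball_mem_nhds x one_pos)
    · exact Filter.Eventually.of_forall fun x' =>
        hf.aestronglyMeasurable.mul
          ((hG_cont.comp (continuous_id.sub continuous_const)).aestronglyMeasurable)
    · refine ((hint1.comp_sub_right x).const_mul C).mono'
        (hf.aestronglyMeasurable.mul
          ((hG_cont.comp (continuous_id.sub continuous_const)).aestronglyMeasurable))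
        (Filter.Eventually.of_forall fun y => ?_)
      rw [Real.norm_eq_abs, abs_mul, abs_of_nonneg (hG_nonneg _)]
      exact mul_le_mul_of_nonneg_right (hbd y) (hG_nonneg _)
    · exact (hf.aestronglyMeasurable.mul ((continuous_const.mul
        (hG_cont.comp (continuous_id.sub continuous_const))).aestronglyMeasurable)).smul
        (((innerSL ℝ).continuous.comp (continuous_id.sub continuous_const)).aestronglyMeasurable)
    · refine Filter.Eventually.of_forall fun y x' hx' => ?_
      have hxx : ‖x' - x‖ < 1 := by rwa [Metric.mem_ball, dist_eq_norm] at hx'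
      have hmn : ‖y - x'‖ ≤ ‖y - x‖ + 1 := by
        have he : y - x' = (y - x) - (x' - x) := by abel
        rw [he]; exact (norm_sub_le _ _).trans (by linarith)
      have hnm : ‖y - x‖ ≤ ‖y - x'‖ + 1 := by
        have he : y - x = (y - x') + (x' - x) := by abel
        rw [he]; exact (norm_add_le _ _).trans (by linarith)
      have hhelp := gauss_bound_helper ha_pos hc_pos.le (hbd y) (norm_nonneg (y - x'))
        (norm_nonneg (y - x)) hmn hnm
      refine ContinuousLinearMap.opNorm_le_bound _ ?_ fun z => ?_
      · refine mul_nonneg (mul_nonneg (mul_nonneg hC0 (by positivity)) (by positivity))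
          (by positivity)
      calc ‖((f y * (2 * a * G (y - x'))) • innerSL ℝ (y - x')) z‖
          = |f y * (2 * a * G (y - x'))| * |(inner ℝ (y - x') z : ℝ)| := by
            rw [ContinuousLinearMap.smul_apply, innerSL_apply_apply, smul_eq_mul,
              Real.norm_eq_abs, abs_mul]
        _ ≤ |f y * (2 * a * G (y - x'))| * (‖y - x'‖ * ‖z‖) :=
            mul_le_mul_of_nonneg_left (abs_real_inner_le_norm _ _) (abs_nonneg _)
        _ = (|f y * (2 * a * G (y - x'))| * ‖y - x'‖) * ‖z‖ := by ring
        _ ≤ (C * (2 * a) * (c * rexp a)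
              * ((‖y - x‖ + 1) * rexp (-(a / 2) * ‖y - x‖ ^ 2))) * ‖z‖ :=
            mul_le_mul_of_nonneg_right (by simpa [hGdef] using hhelp) (norm_nonneg z)
    · have hb1 : Integrable (fun z : EuclideanSpace ℝ (Fin d) =>
          (‖z‖ + 1) * rexp (-(a / 2) * ‖z‖ ^ 2)) := by
        refine ((integrable_norm_mul_exp_gauss d (half_pos ha_pos)).add
          (integrable_exp_gauss d (half_pos ha_pos))).congr
          (Filter.Eventually.of_forall fun z => ?_)
        simp only [Pi.add_apply]
        ring
      exact (hb1.comp_sub_right x).const_mul _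
    · exact Filter.Eventually.of_forall fun y x' _ => hderiv_main y x'
  have hDw : (∫ y, (f y * (2 * a * G (y - x))) • innerSL ℝ (y - x)) = innerSL ℝ w := by
    rw [hw, ← ContinuousLinearMap.integral_comp_comm (innerSL ℝ) hw_int]
    exact integral_congr_ae (Filter.Eventually.of_forall fun y =>
      ((innerSL ℝ).map_smul _ _).symm)
  have hgrad : HasGradientAt u w x := by
    rw [hasGradientAt_iff_hasFDerivAt]
    have htd : (InnerProductSpace.toDual ℝ (EuclideanSpace ℝ (Fin d))) w = innerSL ℝ w :=
      ContinuousLinearMap.ext fun z => by simp [InnerProductSpace.toDual_apply_apply]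
    rw [htd, hu', ← hDw]
    exact key
  rw [hgrad.gradient]
  -- Step B : identify w with the antithetic-form integral
  have hGneg : ∀ z : EuclideanSpace ℝ (Fin d), G (-z) = G z := fun z => by
    simp [hGdef]
  have hPmeas : AEStronglyMeasurable
      (fun δ : EuclideanSpace ℝ (Fin d) => (a * f (x + δ) * G δ) • δ) volume :=
    (((measurable_const.mul (hf.comp (measurable_const_add x))).mul
      hG_cont.measurable).aestronglyMeasurable).smul aestronglyMeasurable_id
  have hQmeas : AEStronglyMeasurable
      (fun δ : EuclideanSpace ℝ (Fin d) => (a * f (x - δ) * G δ) • δ) volume :=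
    (((measurable_const.mul (hf.comp (measurable_const.sub measurable_id))).mul
      hG_cont.measurable).aestronglyMeasurable).smul aestronglyMeasurable_id
  have hPint : Integrable (fun δ : EuclideanSpace ℝ (Fin d) => (a * f (x + δ) * G δ) • δ) := by
    refine (hint2.const_mul (a * C)).mono' hPmeas (Filter.Eventually.of_forall fun δ => ?_)
    rw [norm_smul, Real.norm_eq_abs, abs_mul, abs_mul, abs_of_nonneg ha_pos.le,
      abs_of_nonneg (hG_nonneg δ)]
    calc a * |f (x + δ)| * G δ * ‖δ‖ ≤ a * C * G δ * ‖δ‖ := by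
          gcongr
          exact hbd (x + δ)
      _ = a * C * (‖δ‖ * G δ) := by ring
  have hQint : Integrable (fun δ : EuclideanSpace ℝ (Fin d) => (a * f (x - δ) * G δ) • δ) := by
    refine (hint2.const_mul (a * C)).mono' hQmeas (Filter.Eventually.of_forall fun δ => ?_)
    rw [norm_smul, Real.norm_eq_abs, abs_mul, abs_mul, abs_of_nonneg ha_pos.le,
      abs_of_nonneg (hG_nonneg δ)]
    calc a * |f (x - δ)| * G δ * ‖δ‖ ≤ a * C * G δ * ‖δ‖ := by
          gcongr
          exact hbd (x - δ)
      _ = a * C * (‖δ‖ * G δ) := by ring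
  have hQneg : (∫ δ, (a * f (x - δ) * G δ) • δ)
      = -∫ δ, (a * f (x + δ) * G δ) • δ := by
    calc (∫ δ, (a * f (x - δ) * G δ) • δ)
        = ∫ δ, (a * f (x - -δ) * G (-δ)) • (-δ) :=
          (integral_neg_eq_self (fun δ : EuclideanSpace ℝ (Fin d) =>
            (a * f (x - δ) * G δ) • δ) volume).symm
      _ = ∫ δ, -((a * f (x + δ) * G δ) • δ) := by
          refine integral_congr_ae (Filter.Eventually.of_forall fun δ => ?_)
          simp only [sub_neg_eq_add, hGneg, smul_neg]
      _ = -∫ δ, (a * f (x + δ) * G δ) • δ := integral_neg _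
  symm
  rw [integral_gaussianMeasure hσ, ← ha, ← hc]
  calc ∫ δ, (c * rexp (-a * ‖δ‖ ^ 2)) • (((f (x + δ) - f (x - δ)) / (2 * σ ^ 2)) • δ)
      = ∫ δ, ((a * f (x + δ) * G δ) • δ - (a * f (x - δ) * G δ) • δ) := by
        refine integral_congr_ae (Filter.Eventually.of_forall fun δ => ?_)
        beta_reduce
        rw [smul_smul, ← sub_smul]
        congr 1
        show G δ * ((f (x + δ) - f (x - δ)) / (2 * σ ^ 2)) = _
        rw [ha]
        field_simp
    _ = (∫ δ, (a * f (x + δ) * G δ) • δ) - ∫ δ, (a * f (x - δ) * G δ) • δ :=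
        integral_sub hPint hQint
    _ = (∫ δ, (a * f (x + δ) * G δ) • δ) + ∫ δ, (a * f (x + δ) * G δ) • δ := by
        rw [hQneg, sub_neg_eq_add]
    _ = ∫ δ, ((a * f (x + δ) * G δ) • δ + (a * f (x + δ) * G δ) • δ) :=
        (integral_add hPint hPint).symm
    _ = ∫ δ, (f (x + δ) * (2 * a * G δ)) • δ := by
        refine integral_congr_ae (Filter.Eventually.of_forall fun δ => ?_)
        beta_reduce
        rw [← add_smul]
        congr 1
        ring
    _ = ∫ y, (f (x + (y - x)) * (2 * a * G (y - x))) • (y - x) :=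
        (integral_sub_right_eq_self
          (fun δ : EuclideanSpace ℝ (Fin d) => (f (x + δ) * (2 * a * G δ)) • δ) x).symm
    _ = w := by
        rw [hw]
        refine integral_congr_ae (Filter.Eventually.of_forall fun y => ?_)
        beta_reduce
        rw [add_sub_cancel]
end
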